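/- The Taskin weak order on tableaux is compatible with the product △: if U ≤ U' and V ≤ V' then V △ U ≤ V' △ U'. -/

import Mathlib

/-- Standardization (0-based): replace each letter by its rank among the letters of `w`. -/
def stW (w : List ℕ) : List ℕ := w.map (fun x => (w.filter (· < x)).length)

/-- `w` is the one-line word of a permutation of `{0, …, n-1}` where `n = w.length`. -/
def IsPermWord (w : List ℕ) : Prop := w.Perm (List.range w.length)

/-- The inversion set of a word: pairs `(j, i)` with `j > i` and `j` to the left of `i`. -/
def invSet (w : List ℕ) : Set (ℕ × ℕ) :=
  {p | p.2 < p.1 ∧ ∃ k l : ℕ, k < l ∧ w[k]? = some p.1 ∧ w[l]? = some p.2}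

/-- The right weak order: inclusion of inversion sets. -/
def weakLe (u v : List ℕ) : Prop := invSet u ⊆ invSet v

/-- Left shifted concatenation `v △ u`: the word `v̄ u`, `v̄` being `v` shifted by `|u|`. -/
def triangle (v u : List ℕ) : List ℕ := v.map (· + u.length) ++ u

/-- Right shifted concatenation `u □ v`: the word `u v̄`, `v̄` being `v` shifted by `|u|`. -/
def squareC (u v : List ℕ) : List ℕ := u ++ v.map (· + u.length)

/-- Schensted row insertion: insert `x` into a row, returning the new row and the
bumped entry (if any). -/
def insertRow (x : ℕ) : List ℕ → List ℕ × Option ℕ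
  | [] => ([x], none)
  | y :: ys =>
    if x < y then (x :: ys, some y)
    else
      let r := insertRow x ys
      (y :: r.1, r.2)

/-- Schensted insertion of a letter into a tableau (list of rows, bottom row first). -/
def insertTab : List (List ℕ) → ℕ → List (List ℕ)
  | [], x => [[x]]
  | r :: rs, x =>
    match insertRow x r with
    | (r', none) => r' :: rs
    | (r', some y) => r' :: insertTab rs y

/-- The Robinson–Schensted insertion tableau `P(w)` of a word `w`. -/
def rsP (w : List ℕ) : List (List ℕ) := w.foldl insertTab []

/-- The (row) reading word of a tableau: rows read from the top row down. -/
def rword (t : List (List ℕ)) : List ℕ := t.reverse.flatten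

/-- The Taskin weak order on tableaux: the transitive (and reflexive) closure of
the image of the right weak order under Robinson–Schensted insertion. -/
def taskinLe : List (List ℕ) → List (List ℕ) → Prop :=
  Relation.ReflTransGen (fun T T' => ∃ u v : List ℕ,
    IsPermWord u ∧ IsPermWord v ∧ rsP u = T ∧ rsP v = T' ∧ weakLe u v)

namespace TK


def RowsSorted (T : List (List ℕ)) : Prop := ∀ r ∈ T, r.Pairwise (· < ·)

lemma perm_of_count (l l' : List ℕ) (h : ∀ a, l.count a = l'.count a) : l.Perm l' :=
  List.perm_iff_count.2 h

lemma insertRow_append (s : ℕ) (R : List ℕ) (h : ∀ a ∈ R, a < s) :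
    insertRow s R = (R ++ [s], none) := by
  induction R with
  | nil => rfl
  | cons y ys ih =>
    have hy : y < s := h y (by simp)
    simp only [insertRow, if_neg (by omega : ¬ s < y)]
    rw [ih (fun a ha => h a (by simp [ha]))]
    simp

lemma insertRow_bump (s : ℕ) (A B : List ℕ) (b : ℕ) (hA : ∀ a ∈ A, a < s) (hb : s < b) :
    insertRow s (A ++ b :: B) = (A ++ s :: B, some b) := by
  induction A with
  | nil => simp [insertRow, hb]
  | cons a A ih =>
    have ha : a < s := hA a (by simp)
    simp only [List.cons_append, insertRow, if_neg (by omega : ¬ s < a)]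
    rw [ih (fun x hx => hA x (by simp [hx]))]

lemma insertTab_cons_none {r : List ℕ} {rs : List (List ℕ)} {x : ℕ} {r' : List ℕ}
    (h : insertRow x r = (r', none)) : insertTab (r :: rs) x = r' :: rs := by
  simp [insertTab, h]

lemma insertTab_cons_some {r : List ℕ} {rs : List (List ℕ)} {x : ℕ} {r' : List ℕ} {y : ℕ}
    (h : insertRow x r = (r', some y)) : insertTab (r :: rs) x = r' :: insertTab rs y := by
  simp [insertTab, h]

lemma sorted_split (s : ℕ) : ∀ (R : List ℕ), R.Pairwise (· < ·) → s ∉ R →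
    ∃ A B, R = A ++ B ∧ (∀ a ∈ A, a < s) ∧ (∀ b ∈ B, s < b) := by
  intro R
  induction R with
  | nil => exact fun _ _ => ⟨[], [], rfl, by simp, by simp⟩
  | cons y ys ih =>
    intro h hs
    rcases lt_trichotomy y s with hy | hy | hy
    · obtain ⟨A, B, hAB, hA, hB⟩ := ih h.of_cons (fun hmem => hs (by simp [hmem]))
      refine ⟨y :: A, B, by rw [List.cons_append, hAB], ?_, hB⟩
      intro a ha
      rcases List.mem_cons.1 ha with rfl | ha
      · exact hy
      · exact hA a ha
    · exact absurd (by simp [hy]) hs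
    · refine ⟨[], y :: ys, rfl, by simp, ?_⟩
      intro b hb
      rcases List.mem_cons.1 hb with rfl | hb
      · exact hy
      · exact lt_trans hy (List.rel_of_pairwise_cons h (a' := b) hb)

lemma sorted_append_iff {l l' : List ℕ} :
    (l ++ l').Pairwise (· < ·) ↔ l.Pairwise (· < ·) ∧ l'.Pairwise (· < ·) ∧ ∀ a ∈ l, ∀ b ∈ l', a < b :=
  List.pairwise_append

lemma insertTab_spec : ∀ (T : List (List ℕ)), RowsSorted T → T.flatten.Nodup →
    ∀ x, x ∉ T.flatten →
    RowsSorted (insertTab T x) ∧ (insertTab T x).flatten.Perm (x :: T.flatten) := by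
  intro T
  induction T with
  | nil =>
    intro _ _ x _
    constructor
    · intro r hr; simp [insertTab] at hr; simp [hr]
    · simp [insertTab]
  | cons R rs ih =>
    intro hT hnd x hx
    have hRs : R.Pairwise (· < ·) := hT R (by simp)
    have hxR : x ∉ R := fun h => hx (by simp [h])
    obtain ⟨A, B, rfl, hA, hB⟩ := sorted_split x R hRs hxR
    rcases B with _ | ⟨b, B'⟩
    · rw [insertTab_cons_none (by simpa using insertRow_append x A hA)]
      constructor
      · intro r hr
        rcases List.mem_cons.1 hr with rfl | hr
        · rw [sorted_append_iff]
          exact ⟨by simpa using hRs, by simp, by simpa using hA⟩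
        · exact hT r (by simp [hr])
      · apply perm_of_count
        intro a
        simp [List.count_append, List.count_cons]
        omega
    · have hib : insertRow x (A ++ b :: B') = (A ++ x :: B', some b) :=
        insertRow_bump x A B' b hA (hB b (by simp))
      rw [insertTab_cons_some hib]
      have hsortedR := sorted_append_iff.1 hRs
      have hbB' : ∀ c ∈ B', b < c := fun c hc => List.rel_of_pairwise_cons hsortedR.2.1 (a' := c) hc
      have hbrs : b ∉ rs.flatten := by
        simp only [List.flatten_cons, List.nodup_append] at hnd
        exact fun h => hnd.2.2 b (by simp : b ∈ A ++ b :: B') b h rfl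
      have hrs : RowsSorted rs := fun r hr => hT r (by simp [hr])
      have hndrs : rs.flatten.Nodup := by
        simp only [List.flatten_cons, List.nodup_append] at hnd
        exact hnd.2.1
      obtain ⟨hs1, hp1⟩ := ih hrs hndrs b hbrs
      constructor
      · intro r hr
        rcases List.mem_cons.1 hr with rfl | hr
        · rw [sorted_append_iff]
          refine ⟨hsortedR.1, ?_, ?_⟩
          · rw [List.pairwise_cons]
            exact ⟨fun c hc => lt_trans (hB b (by simp)) (hbB' c hc), hsortedR.2.1.of_cons⟩
          · intro a ha c hc
            rcases List.mem_cons.1 hc with rfl | hc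
            · exact hA a ha
            · exact hsortedR.2.2 a ha c (by simp [hc])
        · exact hs1 r hr
      · have : ((A ++ x :: B') :: insertTab rs b).flatten.Perm
            ((A ++ x :: B') ++ (b :: rs.flatten)) := by
          simp only [List.flatten_cons]
          exact hp1.append_left _
        refine this.trans (perm_of_count _ _ ?_)
        intro a
        simp [List.count_append, List.count_cons]
        omega

lemma rsP_valid : ∀ (w : List ℕ), w.Nodup →
    RowsSorted (rsP w) ∧ (rsP w).flatten.Perm w := by
  intro w
  induction w using List.reverseRecOn with
  | nil => exact fun _ => ⟨fun r hr => by simp [rsP] at hr, by simp [rsP]⟩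
  | append_singleton w x ih =>
    intro hnd
    have hndw : w.Nodup := hnd.of_append_left
    obtain ⟨h1, h2⟩ := ih hndw
    have hxw : x ∉ w := by
      have := List.disjoint_of_nodup_append hnd
      simp [List.disjoint_singleton] at this
      simpa using this
    have hxflat : x ∉ (rsP w).flatten := fun h => hxw (h2.mem_iff.1 h)
    have hndflat : (rsP w).flatten.Nodup := h2.nodup_iff.2 hndw
    have hstep : rsP (w ++ [x]) = insertTab (rsP w) x := by
      simp [rsP, List.foldl_append]
    obtain ⟨hs, hp⟩ := insertTab_spec (rsP w) h1 hndflat x hxflat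
    rw [hstep]
    refine ⟨hs, hp.trans ?_⟩
    apply perm_of_count
    intro a
    have := h2.count_eq a
    simp [List.count_append, List.count_cons]
    omega



lemma tab_bump {A B : List ℕ} {b s : ℕ} {R : List ℕ} {rs : List (List ℕ)}
    (hR : R = A ++ b :: B) (hA : ∀ a ∈ A, a < s) (hb : s < b) :
    insertTab (R :: rs) s = (A ++ s :: B) :: insertTab rs b := by
  subst hR
  simp [insertTab, insertRow_bump s A B b hA hb]

lemma tab_app {s : ℕ} {R : List ℕ} {rs : List (List ℕ)} (h : ∀ a ∈ R, a < s) :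
    insertTab (R :: rs) s = (R ++ [s]) :: rs := by
  simp [insertTab, insertRow_append s R h]

lemma ltall_nil {s : ℕ} : ∀ a ∈ ([] : List ℕ), a < s := by simp

lemma ltall_app {s : ℕ} {l1 l2 : List ℕ} (h1 : ∀ a ∈ l1, a < s) (h2 : ∀ a ∈ l2, a < s) :
    ∀ a ∈ l1 ++ l2, a < s := by
  intro a ha; rcases List.mem_append.1 ha with h | h
  exacts [h1 a h, h2 a h]

lemma ltall_cons {s c : ℕ} {l : List ℕ} (hc : c < s) (h : ∀ a ∈ l, a < s) :
    ∀ a ∈ c :: l, a < s := by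
  intro a ha; rcases List.mem_cons.1 ha with rfl | h'
  exacts [hc, h a h']

theorem knuth_core : ∀ (T : List (List ℕ)), RowsSorted T → T.flatten.Nodup →
    ∀ x y z : ℕ, x < y → y < z →
    x ∉ T.flatten → y ∉ T.flatten → z ∉ T.flatten →
    insertTab (insertTab (insertTab T x) z) y = insertTab (insertTab (insertTab T z) x) y ∧
    insertTab (insertTab (insertTab T y) x) z = insertTab (insertTab (insertTab T y) z) x := by
  intro T
  induction T with
  | nil =>
    intro _ _ x y z hxy hyz _ _ _
    have hxz : x < z := hxy.trans hyz
    constructor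
    · have e1 : insertTab ([] : List (List ℕ)) x = [[x]] := rfl
      have e2 : insertTab [[x]] z = [[x, z]] := by
        have := tab_app (s := z) (R := [x]) (rs := []) (ltall_cons hxz ltall_nil)
        simpa using this
      have e3 : insertTab [[x, z]] y = [x, y] :: insertTab [] z :=
        tab_bump (show [x, z] = [x] ++ z :: [] by simp) (ltall_cons hxy ltall_nil) hyz
      have f1 : insertTab ([] : List (List ℕ)) z = [[z]] := rfl
      have f2 : insertTab [[z]] x = [x] :: insertTab [] z := by
        have := tab_bump (A := []) (B := []) (rs := [])
          (show [z] = [] ++ z :: [] by simp) (ltall_nil (s := x)) hxz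
        simpa using this
      have f3 : insertTab ([x] :: insertTab [] z) y = ([x] ++ [y]) :: insertTab [] z :=
        tab_app (ltall_cons hxy ltall_nil)
      rw [e1, e2, e3, f1, f2, f3]
      simp [insertTab]
    · have e1 : insertTab ([] : List (List ℕ)) y = [[y]] := rfl
      have e2 : insertTab [[y]] x = [x] :: insertTab [] y := by
        have := tab_bump (A := []) (B := []) (rs := [])
          (show [y] = [] ++ y :: [] by simp) (ltall_nil (s := x)) hxy
        simpa using this
      have e3 : insertTab ([x] :: insertTab [] y) z = ([x] ++ [z]) :: insertTab [] y :=
        tab_app (ltall_cons hxz ltall_nil)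
      have f2 : insertTab [[y]] z = [[y, z]] := by
        have := tab_app (s := z) (R := [y]) (rs := []) (ltall_cons hyz ltall_nil)
        simpa using this
      have f3 : insertTab [[y, z]] x = [x, z] :: insertTab [] y :=
        tab_bump (show [y, z] = [] ++ y :: [z] by simp) ltall_nil hxy
      rw [e1, e2, e3, f2, f3]
      simp [insertTab]
  | cons R rs ih =>
    intro hT hnd x y z hxy hyz hx hy hz
    have hxz : x < z := hxy.trans hyz
    have hRs : R.Pairwise (· < ·) := hT R (by simp)
    have hrs : RowsSorted rs := fun r hr => hT r (by simp [hr])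
    simp only [List.flatten_cons] at hnd hx hy hz
    have hndrs : rs.flatten.Nodup := (List.nodup_append.1 hnd).2.1
    have hdisj : ∀ a ∈ R, a ∉ rs.flatten := fun a ha h => (List.nodup_append.1 hnd).2.2 a ha a h rfl
    have hxR : x ∉ R := fun h => hx (List.mem_append.2 (Or.inl h))
    have hyR : y ∉ R := fun h => hy (List.mem_append.2 (Or.inl h))
    have hzR : z ∉ R := fun h => hz (List.mem_append.2 (Or.inl h))
    have hxrs : x ∉ rs.flatten := fun h => hx (List.mem_append.2 (Or.inr h))
    have hyrs : y ∉ rs.flatten := fun h => hy (List.mem_append.2 (Or.inr h))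
    have hzrs : z ∉ rs.flatten := fun h => hz (List.mem_append.2 (Or.inr h))
    obtain ⟨P1, Q1, hR1, hb1, hQ1⟩ := sorted_split x R hRs hxR
    subst hR1
    have hQ1s : Q1.Pairwise (· < ·) := (sorted_append_iff.1 hRs).2.1
    have hyQ1 : y ∉ Q1 := fun h => hyR (List.mem_append.2 (Or.inr h))
    obtain ⟨P2, Q2, hR2, hb2, hQ2⟩ := sorted_split y Q1 hQ1s hyQ1
    subst hR2
    have hQ2s : Q2.Pairwise (· < ·) := (sorted_append_iff.1 hQ1s).2.1
    have hzQ2 : z ∉ Q2 := fun h => hzR (by simp [h])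
    obtain ⟨P3, P4, hR3, hb3, hb4⟩ := sorted_split z Q2 hQ2s hzQ2
    subst hR3
    have hP3s : P3.Pairwise (· < ·) := (sorted_append_iff.1 hQ2s).1
    have hP4s : P4.Pairwise (· < ·) := (sorted_append_iff.1 hQ2s).2.1
    have lo2 : ∀ a ∈ P2, x < a := fun a ha => hQ1 a (by simp [ha])
    have lo3 : ∀ a ∈ P3, y < a := fun a ha => hQ2 a (by simp [ha])
    have lo4 : ∀ a ∈ P4, y < a := fun a ha => hQ2 a (by simp [ha])
    have B1y : ∀ a ∈ P1, a < y := fun a ha => (hb1 a ha).trans hxy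
    have B1z : ∀ a ∈ P1, a < z := fun a ha => (hb1 a ha).trans hxz
    have B2z : ∀ a ∈ P2, a < z := fun a ha => (hb2 a ha).trans hyz
    have IH1 : ∀ a b c : ℕ, a < b → b < c → a ∉ rs.flatten → b ∉ rs.flatten →
        c ∉ rs.flatten →
        insertTab (insertTab (insertTab rs a) c) b = insertTab (insertTab (insertTab rs c) a) b :=
      fun a b c hab hbc ha hb hc => (ih hrs hndrs a b c hab hbc ha hb hc).1
    have IH2 : ∀ a b c : ℕ, a < b → b < c → a ∉ rs.flatten → b ∉ rs.flatten →
        c ∉ rs.flatten →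
        insertTab (insertTab (insertTab rs b) a) c = insertTab (insertTab (insertTab rs b) c) a :=
      fun a b c hab hbc ha hb hc => (ih hrs hndrs a b c hab hbc ha hb hc).2
    constructor
    · -- L1 : insert x,z,y = insert z,x,y
      rcases P2 with _ | ⟨p2, P2'⟩
      · -- P2 = []
        rcases P3 with _ | ⟨p3, P3'⟩
        · -- P3 = []
          rcases P4 with _ | ⟨q, P4'⟩
          · -- n1 : all empty
            have eL1 : insertTab ((P1 ++ ([] ++ ([] ++ []))) :: rs) x
                = ((P1 ++ ([] ++ ([] ++ []))) ++ [x]) :: rs :=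
              tab_app (ltall_app hb1 (ltall_app ltall_nil (ltall_app ltall_nil ltall_nil)))
            have eL2 : insertTab (((P1 ++ ([] ++ ([] ++ []))) ++ [x]) :: rs) z
                = (((P1 ++ ([] ++ ([] ++ []))) ++ [x]) ++ [z]) :: rs :=
              tab_app (ltall_app (ltall_app B1z (ltall_app ltall_nil (ltall_app ltall_nil ltall_nil)))
                (ltall_cons hxz ltall_nil))
            have eL3 : insertTab ((((P1 ++ ([] ++ ([] ++ []))) ++ [x]) ++ [z]) :: rs) y
                = ((P1 ++ [x]) ++ y :: []) :: insertTab rs z :=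
              tab_bump (by simp) (ltall_app B1y (ltall_cons hxy ltall_nil)) hyz
            have eR1 : insertTab ((P1 ++ ([] ++ ([] ++ []))) :: rs) z
                = ((P1 ++ ([] ++ ([] ++ []))) ++ [z]) :: rs :=
              tab_app (ltall_app B1z (ltall_app ltall_nil (ltall_app ltall_nil ltall_nil)))
            have eR2 : insertTab (((P1 ++ ([] ++ ([] ++ []))) ++ [z]) :: rs) x
                = (P1 ++ x :: []) :: insertTab rs z :=
              tab_bump (by simp) hb1 hxz
            have eR3 : insertTab ((P1 ++ x :: []) :: insertTab rs z) y
                = ((P1 ++ x :: []) ++ [y]) :: insertTab rs z :=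
              tab_app (ltall_app B1y (ltall_cons hxy ltall_nil))
            rw [eL1, eL2, eL3, eR1, eR2, eR3]
          · -- γ : P4 = q :: P4'
            have hzq : z < q := hb4 q (by simp)
            have hxq : x < q := hxz.trans hzq
            have fq : q ∉ rs.flatten := hdisj q (by simp)
            rcases P4' with _ | ⟨q2, P4''⟩
            · -- γ1 : P4 = [q]
              have eL1 : insertTab ((P1 ++ ([] ++ ([] ++ [q]))) :: rs) x
                  = (P1 ++ x :: []) :: insertTab rs q :=
                tab_bump (by simp) hb1 hxq
              have eL2 : insertTab ((P1 ++ x :: []) :: insertTab rs q) z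
                  = ((P1 ++ x :: []) ++ [z]) :: insertTab rs q :=
                tab_app (ltall_app B1z (ltall_cons hxz ltall_nil))
              have eL3 : insertTab (((P1 ++ x :: []) ++ [z]) :: insertTab rs q) y
                  = ((P1 ++ [x]) ++ y :: []) :: insertTab (insertTab rs q) z :=
                tab_bump (by simp) (ltall_app B1y (ltall_cons hxy ltall_nil)) hyz
              have eR1 : insertTab ((P1 ++ ([] ++ ([] ++ [q]))) :: rs) z
                  = (P1 ++ z :: []) :: insertTab rs q :=
                tab_bump (by simp) B1z hzq
              have eR2 : insertTab ((P1 ++ z :: []) :: insertTab rs q) x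
                  = (P1 ++ x :: []) :: insertTab (insertTab rs q) z :=
                tab_bump (by simp) hb1 hxz
              have eR3 : insertTab ((P1 ++ x :: []) :: insertTab (insertTab rs q) z) y
                  = ((P1 ++ x :: []) ++ [y]) :: insertTab (insertTab rs q) z :=
                tab_app (ltall_app B1y (ltall_cons hxy ltall_nil))
              rw [eL1, eL2, eL3, eR1, eR2, eR3]
            · -- γ2 : P4 = q :: q2 :: P4''
              have hqq2 : q < q2 := List.rel_of_pairwise_cons hP4s (a' := q2) (by simp)
              have hzq2 : z < q2 := hb4 q2 (by simp)
              have hyq2 : y < q2 := hyz.trans hzq2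
              have fq2 : q2 ∉ rs.flatten := hdisj q2 (by simp)
              have eL1 : insertTab ((P1 ++ ([] ++ ([] ++ q :: q2 :: P4''))) :: rs) x
                  = (P1 ++ x :: q2 :: P4'') :: insertTab rs q :=
                tab_bump (by simp) hb1 hxq
              have eL2 : insertTab ((P1 ++ x :: q2 :: P4'') :: insertTab rs q) z
                  = ((P1 ++ [x]) ++ z :: P4'') :: insertTab (insertTab rs q) q2 :=
                tab_bump (by simp) (ltall_app B1z (ltall_cons hxz ltall_nil)) hzq2
              have eL3 : insertTab (((P1 ++ [x]) ++ z :: P4'') :: insertTab (insertTab rs q) q2) y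
                  = ((P1 ++ [x]) ++ y :: P4'') :: insertTab (insertTab (insertTab rs q) q2) z :=
                tab_bump (by simp) (ltall_app B1y (ltall_cons hxy ltall_nil)) hyz
              have eR1 : insertTab ((P1 ++ ([] ++ ([] ++ q :: q2 :: P4''))) :: rs) z
                  = (P1 ++ z :: q2 :: P4'') :: insertTab rs q :=
                tab_bump (by simp) B1z hzq
              have eR2 : insertTab ((P1 ++ z :: q2 :: P4'') :: insertTab rs q) x
                  = (P1 ++ x :: q2 :: P4'') :: insertTab (insertTab rs q) z :=
                tab_bump (by simp) hb1 hxz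
              have eR3 : insertTab ((P1 ++ x :: q2 :: P4'') :: insertTab (insertTab rs q) z) y
                  = ((P1 ++ [x]) ++ y :: P4'') :: insertTab (insertTab (insertTab rs q) z) q2 :=
                tab_bump (by simp) (ltall_app B1y (ltall_cons hxy ltall_nil)) hyq2
              rw [eL1, eL2, eL3, eR1, eR2, eR3, IH2 z q q2 hzq hqq2 hzrs fq fq2]
        · -- β : P3 = p3 :: P3'
          have hyp3 : y < p3 := lo3 p3 (by simp)
          have hp3z : p3 < z := hb3 p3 (by simp)
          have hxp3 : x < p3 := hxy.trans hyp3
          have fp3 : p3 ∉ rs.flatten := hdisj p3 (by simp)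
          have B3'z : ∀ a ∈ P3', a < z := fun a ha => hb3 a (by simp [ha])
          rcases P4 with _ | ⟨q, P4'⟩
          · -- β1 : P4 = []
            rcases P3' with _ | ⟨p32, P3''⟩
            · -- β1b : P3 = [p3]
              have eL1 : insertTab ((P1 ++ ([] ++ ([p3] ++ []))) :: rs) x
                  = (P1 ++ x :: []) :: insertTab rs p3 :=
                tab_bump (by simp) hb1 hxp3
              have eL2 : insertTab ((P1 ++ x :: []) :: insertTab rs p3) z
                  = ((P1 ++ x :: []) ++ [z]) :: insertTab rs p3 :=
                tab_app (ltall_app B1z (ltall_cons hxz ltall_nil))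
              have eL3 : insertTab (((P1 ++ x :: []) ++ [z]) :: insertTab rs p3) y
                  = ((P1 ++ [x]) ++ y :: []) :: insertTab (insertTab rs p3) z :=
                tab_bump (by simp) (ltall_app B1y (ltall_cons hxy ltall_nil)) hyz
              have eR1 : insertTab ((P1 ++ ([] ++ ([p3] ++ []))) :: rs) z
                  = ((P1 ++ ([] ++ ([p3] ++ []))) ++ [z]) :: rs :=
                tab_app (ltall_app B1z (ltall_app ltall_nil
                  (ltall_app (ltall_cons hp3z ltall_nil) ltall_nil)))
              have eR2 : insertTab (((P1 ++ ([] ++ ([p3] ++ []))) ++ [z]) :: rs) x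
                  = (P1 ++ x :: [z]) :: insertTab rs p3 :=
                tab_bump (by simp) hb1 hxp3
              have eR3 : insertTab ((P1 ++ x :: [z]) :: insertTab rs p3) y
                  = ((P1 ++ [x]) ++ y :: []) :: insertTab (insertTab rs p3) z :=
                tab_bump (by simp) (ltall_app B1y (ltall_cons hxy ltall_nil)) hyz
              rw [eL1, eL2, eL3, eR1, eR2, eR3]
            · -- β1a : P3 = p3 :: p32 :: P3''
              have hp3p32 : p3 < p32 := List.rel_of_pairwise_cons hP3s (a' := p32) (by simp)
              have hyp32 : y < p32 := lo3 p32 (by simp)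
              have hp32z : p32 < z := hb3 p32 (by simp)
              have fp32 : p32 ∉ rs.flatten := hdisj p32 (by simp)
              have B3''z : ∀ a ∈ P3'', a < z := fun a ha => hb3 a (by simp [ha])
              have eL1 : insertTab ((P1 ++ ([] ++ (p3 :: p32 :: P3'' ++ []))) :: rs) x
                  = (P1 ++ x :: (p32 :: P3'' ++ [])) :: insertTab rs p3 :=
                tab_bump (by simp) hb1 hxp3
              have eL2 : insertTab ((P1 ++ x :: (p32 :: P3'' ++ [])) :: insertTab rs p3) z
                  = ((P1 ++ x :: (p32 :: P3'' ++ [])) ++ [z]) :: insertTab rs p3 :=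
                tab_app (ltall_app B1z (ltall_cons hxz
                  (ltall_app (ltall_cons hp32z B3''z) ltall_nil)))
              have eL3 : insertTab (((P1 ++ x :: (p32 :: P3'' ++ [])) ++ [z]) :: insertTab rs p3) y
                  = ((P1 ++ [x]) ++ y :: (P3'' ++ [z])) :: insertTab (insertTab rs p3) p32 :=
                tab_bump (by simp) (ltall_app B1y (ltall_cons hxy ltall_nil)) hyp32
              have eR1 : insertTab ((P1 ++ ([] ++ (p3 :: p32 :: P3'' ++ []))) :: rs) z
                  = ((P1 ++ ([] ++ (p3 :: p32 :: P3'' ++ []))) ++ [z]) :: rs :=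
                tab_app (ltall_app B1z (ltall_app ltall_nil
                  (ltall_app (ltall_cons hp3z (ltall_cons hp32z B3''z)) ltall_nil)))
              have eR2 : insertTab (((P1 ++ ([] ++ (p3 :: p32 :: P3'' ++ []))) ++ [z]) :: rs) x
                  = (P1 ++ x :: (p32 :: P3'' ++ [z])) :: insertTab rs p3 :=
                tab_bump (by simp) hb1 hxp3
              have eR3 : insertTab ((P1 ++ x :: (p32 :: P3'' ++ [z])) :: insertTab rs p3) y
                  = ((P1 ++ [x]) ++ y :: (P3'' ++ [z])) :: insertTab (insertTab rs p3) p32 :=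
                tab_bump (by simp) (ltall_app B1y (ltall_cons hxy ltall_nil)) hyp32
              rw [eL1, eL2, eL3, eR1, eR2, eR3]
          · -- β2 : P4 = q :: P4'
            have hzq : z < q := hb4 q (by simp)
            have fq : q ∉ rs.flatten := hdisj q (by simp)
            rcases P3' with _ | ⟨p32, P3''⟩
            · -- β2b : P3 = [p3]
              have eL1 : insertTab ((P1 ++ ([] ++ ([p3] ++ q :: P4'))) :: rs) x
                  = (P1 ++ x :: q :: P4') :: insertTab rs p3 :=
                tab_bump (by simp) hb1 hxp3
              have eL2 : insertTab ((P1 ++ x :: q :: P4') :: insertTab rs p3) z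
                  = ((P1 ++ [x]) ++ z :: P4') :: insertTab (insertTab rs p3) q :=
                tab_bump (by simp) (ltall_app B1z (ltall_cons hxz ltall_nil)) hzq
              have eL3 : insertTab (((P1 ++ [x]) ++ z :: P4') :: insertTab (insertTab rs p3) q) y
                  = ((P1 ++ [x]) ++ y :: P4') :: insertTab (insertTab (insertTab rs p3) q) z :=
                tab_bump (by simp) (ltall_app B1y (ltall_cons hxy ltall_nil)) hyz
              have eR1 : insertTab ((P1 ++ ([] ++ ([p3] ++ q :: P4'))) :: rs) z
                  = ((P1 ++ [p3]) ++ z :: P4') :: insertTab rs q :=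
                tab_bump (by simp) (ltall_app B1z (ltall_cons hp3z ltall_nil)) hzq
              have eR2 : insertTab (((P1 ++ [p3]) ++ z :: P4') :: insertTab rs q) x
                  = (P1 ++ x :: z :: P4') :: insertTab (insertTab rs q) p3 :=
                tab_bump (by simp) hb1 hxp3
              have eR3 : insertTab ((P1 ++ x :: z :: P4') :: insertTab (insertTab rs q) p3) y
                  = ((P1 ++ [x]) ++ y :: P4') :: insertTab (insertTab (insertTab rs q) p3) z :=
                tab_bump (by simp) (ltall_app B1y (ltall_cons hxy ltall_nil)) hyz
              rw [eL1, eL2, eL3, eR1, eR2, eR3, IH1 p3 z q hp3z hzq fp3 hzrs fq]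
            · -- β2a : P3 = p3 :: p32 :: P3''
              have hp3p32 : p3 < p32 := List.rel_of_pairwise_cons hP3s (a' := p32) (by simp)
              have hyp32 : y < p32 := lo3 p32 (by simp)
              have hp32z : p32 < z := hb3 p32 (by simp)
              have hp32q : p32 < q := hp32z.trans hzq
              have fp32 : p32 ∉ rs.flatten := hdisj p32 (by simp)
              have B3''z : ∀ a ∈ P3'', a < z := fun a ha => hb3 a (by simp [ha])
              have eL1 : insertTab ((P1 ++ ([] ++ (p3 :: p32 :: P3'' ++ q :: P4'))) :: rs) x
                  = (P1 ++ x :: (p32 :: P3'' ++ q :: P4')) :: insertTab rs p3 :=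
                tab_bump (by simp) hb1 hxp3
              have eL2 : insertTab ((P1 ++ x :: (p32 :: P3'' ++ q :: P4')) :: insertTab rs p3) z
                  = ((P1 ++ x :: p32 :: P3'') ++ z :: P4') :: insertTab (insertTab rs p3) q :=
                tab_bump (by simp) (ltall_app B1z (ltall_cons hxz (ltall_cons hp32z B3''z))) hzq
              have eL3 : insertTab (((P1 ++ x :: p32 :: P3'') ++ z :: P4') ::
                    insertTab (insertTab rs p3) q) y
                  = ((P1 ++ [x]) ++ y :: (P3'' ++ z :: P4')) ::
                    insertTab (insertTab (insertTab rs p3) q) p32 :=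
                tab_bump (by simp) (ltall_app B1y (ltall_cons hxy ltall_nil)) hyp32
              have eR1 : insertTab ((P1 ++ ([] ++ (p3 :: p32 :: P3'' ++ q :: P4'))) :: rs) z
                  = ((P1 ++ p3 :: p32 :: P3'') ++ z :: P4') :: insertTab rs q :=
                tab_bump (by simp) (ltall_app B1z (ltall_cons hp3z (ltall_cons hp32z B3''z))) hzq
              have eR2 : insertTab (((P1 ++ p3 :: p32 :: P3'') ++ z :: P4') :: insertTab rs q) x
                  = (P1 ++ x :: (p32 :: P3'' ++ z :: P4')) :: insertTab (insertTab rs q) p3 :=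
                tab_bump (by simp) hb1 hxp3
              have eR3 : insertTab ((P1 ++ x :: (p32 :: P3'' ++ z :: P4')) ::
                    insertTab (insertTab rs q) p3) y
                  = ((P1 ++ [x]) ++ y :: (P3'' ++ z :: P4')) ::
                    insertTab (insertTab (insertTab rs q) p3) p32 :=
                tab_bump (by simp) (ltall_app B1y (ltall_cons hxy ltall_nil)) hyp32
              rw [eL1, eL2, eL3, eR1, eR2, eR3, IH1 p3 p32 q hp3p32 hp32q fp3 fp32 fq]
      · -- α : P2 = p2 :: P2'
        have hxp2 : x < p2 := lo2 p2 (by simp)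
        have hp2y : p2 < y := hb2 p2 (by simp)
        have hp2z : p2 < z := hp2y.trans hyz
        have fp2 : p2 ∉ rs.flatten := hdisj p2 (by simp)
        have B2'y : ∀ a ∈ P2', a < y := fun a ha => hb2 a (by simp [ha])
        have B2'z : ∀ a ∈ P2', a < z := fun a ha => (hb2 a (by simp [ha])).trans hyz
        rcases P4 with _ | ⟨q, P4'⟩
        · -- α1 : P4 = []
          rcases P3 with _ | ⟨p3, P3'⟩
          · -- α1b : P3 = []
            have eL1 : insertTab ((P1 ++ (p2 :: P2' ++ ([] ++ []))) :: rs) x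
                = (P1 ++ x :: P2') :: insertTab rs p2 :=
              tab_bump (by simp) hb1 hxp2
            have eL2 : insertTab ((P1 ++ x :: P2') :: insertTab rs p2) z
                = ((P1 ++ x :: P2') ++ [z]) :: insertTab rs p2 :=
              tab_app (ltall_app B1z (ltall_cons hxz B2'z))
            have eL3 : insertTab (((P1 ++ x :: P2') ++ [z]) :: insertTab rs p2) y
                = ((P1 ++ x :: P2') ++ y :: []) :: insertTab (insertTab rs p2) z :=
              tab_bump (by simp) (ltall_app B1y (ltall_cons hxy B2'y)) hyz
            have eR1 : insertTab ((P1 ++ (p2 :: P2' ++ ([] ++ []))) :: rs) z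
                = ((P1 ++ (p2 :: P2' ++ ([] ++ []))) ++ [z]) :: rs :=
              tab_app (ltall_app B1z (ltall_app (ltall_cons hp2z B2'z)
                (ltall_app ltall_nil ltall_nil)))
            have eR2 : insertTab (((P1 ++ (p2 :: P2' ++ ([] ++ []))) ++ [z]) :: rs) x
                = (P1 ++ x :: (P2' ++ [z])) :: insertTab rs p2 :=
              tab_bump (by simp) hb1 hxp2
            have eR3 : insertTab ((P1 ++ x :: (P2' ++ [z])) :: insertTab rs p2) y
                = ((P1 ++ x :: P2') ++ y :: []) :: insertTab (insertTab rs p2) z :=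
              tab_bump (by simp) (ltall_app B1y (ltall_cons hxy B2'y)) hyz
            rw [eL1, eL2, eL3, eR1, eR2, eR3]
          · -- α1a : P3 = p3 :: P3'
            have hyp3 : y < p3 := lo3 p3 (by simp)
            have hp3z : p3 < z := hb3 p3 (by simp)
            have B3'z : ∀ a ∈ P3', a < z := fun a ha => hb3 a (by simp [ha])
            have eL1 : insertTab ((P1 ++ (p2 :: P2' ++ (p3 :: P3' ++ []))) :: rs) x
                = (P1 ++ x :: (P2' ++ (p3 :: P3' ++ []))) :: insertTab rs p2 :=
              tab_bump (by simp) hb1 hxp2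
            have eL2 : insertTab ((P1 ++ x :: (P2' ++ (p3 :: P3' ++ []))) :: insertTab rs p2) z
                = ((P1 ++ x :: (P2' ++ (p3 :: P3' ++ []))) ++ [z]) :: insertTab rs p2 :=
              tab_app (ltall_app B1z (ltall_cons hxz (ltall_app B2'z
                (ltall_app (ltall_cons hp3z B3'z) ltall_nil))))
            have eL3 : insertTab (((P1 ++ x :: (P2' ++ (p3 :: P3' ++ []))) ++ [z]) ::
                  insertTab rs p2) y
                = ((P1 ++ x :: P2') ++ y :: (P3' ++ [z])) :: insertTab (insertTab rs p2) p3 :=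
              tab_bump (by simp) (ltall_app B1y (ltall_cons hxy B2'y)) hyp3
            have eR1 : insertTab ((P1 ++ (p2 :: P2' ++ (p3 :: P3' ++ []))) :: rs) z
                = ((P1 ++ (p2 :: P2' ++ (p3 :: P3' ++ []))) ++ [z]) :: rs :=
              tab_app (ltall_app B1z (ltall_app (ltall_cons hp2z B2'z)
                (ltall_app (ltall_cons hp3z B3'z) ltall_nil)))
            have eR2 : insertTab (((P1 ++ (p2 :: P2' ++ (p3 :: P3' ++ []))) ++ [z]) :: rs) x
                = (P1 ++ x :: (P2' ++ (p3 :: P3' ++ [z]))) :: insertTab rs p2 :=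
              tab_bump (by simp) hb1 hxp2
            have eR3 : insertTab ((P1 ++ x :: (P2' ++ (p3 :: P3' ++ [z]))) :: insertTab rs p2) y
                = ((P1 ++ x :: P2') ++ y :: (P3' ++ [z])) :: insertTab (insertTab rs p2) p3 :=
              tab_bump (by simp) (ltall_app B1y (ltall_cons hxy B2'y)) hyp3
            rw [eL1, eL2, eL3, eR1, eR2, eR3]
        · -- α2 : P4 = q :: P4'
          have hzq : z < q := hb4 q (by simp)
          have fq : q ∉ rs.flatten := hdisj q (by simp)
          rcases P3 with _ | ⟨p3, P3'⟩
          · -- α2b : P3 = []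
            have eL1 : insertTab ((P1 ++ (p2 :: P2' ++ ([] ++ q :: P4'))) :: rs) x
                = (P1 ++ x :: (P2' ++ q :: P4')) :: insertTab rs p2 :=
              tab_bump (by simp) hb1 hxp2
            have eL2 : insertTab ((P1 ++ x :: (P2' ++ q :: P4')) :: insertTab rs p2) z
                = ((P1 ++ x :: P2') ++ z :: P4') :: insertTab (insertTab rs p2) q :=
              tab_bump (by simp) (ltall_app B1z (ltall_cons hxz B2'z)) hzq
            have eL3 : insertTab (((P1 ++ x :: P2') ++ z :: P4') ::
                  insertTab (insertTab rs p2) q) y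
                = ((P1 ++ x :: P2') ++ y :: P4') :: insertTab (insertTab (insertTab rs p2) q) z :=
              tab_bump (by simp) (ltall_app B1y (ltall_cons hxy B2'y)) hyz
            have eR1 : insertTab ((P1 ++ (p2 :: P2' ++ ([] ++ q :: P4'))) :: rs) z
                = ((P1 ++ p2 :: P2') ++ z :: P4') :: insertTab rs q :=
              tab_bump (by simp) (ltall_app B1z (ltall_cons hp2z B2'z)) hzq
            have eR2 : insertTab (((P1 ++ p2 :: P2') ++ z :: P4') :: insertTab rs q) x
                = (P1 ++ x :: (P2' ++ z :: P4')) :: insertTab (insertTab rs q) p2 :=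
              tab_bump (by simp) hb1 hxp2
            have eR3 : insertTab ((P1 ++ x :: (P2' ++ z :: P4')) ::
                  insertTab (insertTab rs q) p2) y
                = ((P1 ++ x :: P2') ++ y :: P4') :: insertTab (insertTab (insertTab rs q) p2) z :=
              tab_bump (by simp) (ltall_app B1y (ltall_cons hxy B2'y)) hyz
            rw [eL1, eL2, eL3, eR1, eR2, eR3, IH1 p2 z q hp2z hzq fp2 hzrs fq]
          · -- α2a : P3 = p3 :: P3'
            have hyp3 : y < p3 := lo3 p3 (by simp)
            have hp3z : p3 < z := hb3 p3 (by simp)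
            have hp2p3 : p2 < p3 := hp2y.trans hyp3
            have hp3q : p3 < q := hp3z.trans hzq
            have fp3 : p3 ∉ rs.flatten := hdisj p3 (by simp)
            have B3'z : ∀ a ∈ P3', a < z := fun a ha => hb3 a (by simp [ha])
            have eL1 : insertTab ((P1 ++ (p2 :: P2' ++ (p3 :: P3' ++ q :: P4'))) :: rs) x
                = (P1 ++ x :: (P2' ++ (p3 :: P3' ++ q :: P4'))) :: insertTab rs p2 :=
              tab_bump (by simp) hb1 hxp2
            have eL2 : insertTab ((P1 ++ x :: (P2' ++ (p3 :: P3' ++ q :: P4'))) ::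
                  insertTab rs p2) z
                = ((P1 ++ x :: (P2' ++ p3 :: P3')) ++ z :: P4') ::
                  insertTab (insertTab rs p2) q :=
              tab_bump (by simp) (ltall_app B1z (ltall_cons hxz
                (ltall_app B2'z (ltall_cons hp3z B3'z)))) hzq
            have eL3 : insertTab (((P1 ++ x :: (P2' ++ p3 :: P3')) ++ z :: P4') ::
                  insertTab (insertTab rs p2) q) y
                = ((P1 ++ x :: P2') ++ y :: (P3' ++ z :: P4')) ::
                  insertTab (insertTab (insertTab rs p2) q) p3 :=
              tab_bump (by simp) (ltall_app B1y (ltall_cons hxy B2'y)) hyp3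
            have eR1 : insertTab ((P1 ++ (p2 :: P2' ++ (p3 :: P3' ++ q :: P4'))) :: rs) z
                = ((P1 ++ (p2 :: P2' ++ p3 :: P3')) ++ z :: P4') :: insertTab rs q :=
              tab_bump (by simp) (ltall_app B1z (ltall_app (ltall_cons hp2z B2'z)
                (ltall_cons hp3z B3'z))) hzq
            have eR2 : insertTab (((P1 ++ (p2 :: P2' ++ p3 :: P3')) ++ z :: P4') ::
                  insertTab rs q) x
                = (P1 ++ x :: (P2' ++ (p3 :: P3' ++ z :: P4'))) ::
                  insertTab (insertTab rs q) p2 :=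
              tab_bump (by simp) hb1 hxp2
            have eR3 : insertTab ((P1 ++ x :: (P2' ++ (p3 :: P3' ++ z :: P4'))) ::
                  insertTab (insertTab rs q) p2) y
                = ((P1 ++ x :: P2') ++ y :: (P3' ++ z :: P4')) ::
                  insertTab (insertTab (insertTab rs q) p2) p3 :=
              tab_bump (by simp) (ltall_app B1y (ltall_cons hxy B2'y)) hyp3
            rw [eL1, eL2, eL3, eR1, eR2, eR3, IH1 p2 p3 q hp2p3 hp3q fp2 fp3 fq]
    · -- L2 : insert y,x,z = insert y,z,x
      rcases P3 with _ | ⟨p3, P3'⟩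
      · -- P3 = []
        rcases P4 with _ | ⟨q, P4'⟩
        · -- a : P4 = []
          rcases P2 with _ | ⟨p2, P2'⟩
          · -- a2 : P2 = []
            have eY : insertTab ((P1 ++ ([] ++ ([] ++ []))) :: rs) y
                = ((P1 ++ ([] ++ ([] ++ []))) ++ [y]) :: rs :=
              tab_app (ltall_app B1y (ltall_app ltall_nil (ltall_app ltall_nil ltall_nil)))
            have eL2 : insertTab (((P1 ++ ([] ++ ([] ++ []))) ++ [y]) :: rs) x
                = (P1 ++ x :: []) :: insertTab rs y :=
              tab_bump (by simp) hb1 hxy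
            have eL3 : insertTab ((P1 ++ x :: []) :: insertTab rs y) z
                = ((P1 ++ x :: []) ++ [z]) :: insertTab rs y :=
              tab_app (ltall_app B1z (ltall_cons hxz ltall_nil))
            have eR2 : insertTab (((P1 ++ ([] ++ ([] ++ []))) ++ [y]) :: rs) z
                = (((P1 ++ ([] ++ ([] ++ []))) ++ [y]) ++ [z]) :: rs :=
              tab_app (ltall_app (ltall_app B1z (ltall_app ltall_nil
                (ltall_app ltall_nil ltall_nil))) (ltall_cons hyz ltall_nil))
            have eR3 : insertTab ((((P1 ++ ([] ++ ([] ++ []))) ++ [y]) ++ [z]) :: rs) x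
                = (P1 ++ x :: [z]) :: insertTab rs y :=
              tab_bump (by simp) hb1 hxy
            rw [eY, eL2, eL3, eR2, eR3]
            simp
          · -- a1 : P2 = p2 :: P2'
            have hxp2 : x < p2 := lo2 p2 (by simp)
            have hp2y : p2 < y := hb2 p2 (by simp)
            have hp2z : p2 < z := hp2y.trans hyz
            have fp2 : p2 ∉ rs.flatten := hdisj p2 (by simp)
            have B2'y : ∀ a ∈ P2', a < y := fun a ha => hb2 a (by simp [ha])
            have B2'z : ∀ a ∈ P2', a < z := fun a ha => (hb2 a (by simp [ha])).trans hyz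
            have eY : insertTab ((P1 ++ (p2 :: P2' ++ ([] ++ []))) :: rs) y
                = ((P1 ++ (p2 :: P2' ++ ([] ++ []))) ++ [y]) :: rs :=
              tab_app (ltall_app B1y (ltall_app (ltall_cons hp2y B2'y)
                (ltall_app ltall_nil ltall_nil)))
            have eL2 : insertTab (((P1 ++ (p2 :: P2' ++ ([] ++ []))) ++ [y]) :: rs) x
                = (P1 ++ x :: (P2' ++ [y])) :: insertTab rs p2 :=
              tab_bump (by simp) hb1 hxp2
            have eL3 : insertTab ((P1 ++ x :: (P2' ++ [y])) :: insertTab rs p2) z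
                = ((P1 ++ x :: (P2' ++ [y])) ++ [z]) :: insertTab rs p2 :=
              tab_app (ltall_app B1z (ltall_cons hxz (ltall_app B2'z
                (ltall_cons hyz ltall_nil))))
            have eR2 : insertTab (((P1 ++ (p2 :: P2' ++ ([] ++ []))) ++ [y]) :: rs) z
                = (((P1 ++ (p2 :: P2' ++ ([] ++ []))) ++ [y]) ++ [z]) :: rs :=
              tab_app (ltall_app (ltall_app B1z (ltall_app (ltall_cons hp2z B2'z)
                (ltall_app ltall_nil ltall_nil))) (ltall_cons hyz ltall_nil))
            have eR3 : insertTab ((((P1 ++ (p2 :: P2' ++ ([] ++ []))) ++ [y]) ++ [z]) :: rs) x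
                = (P1 ++ x :: (P2' ++ y :: [z])) :: insertTab rs p2 :=
              tab_bump (by simp) hb1 hxp2
            rw [eY, eL2, eL3, eR2, eR3]
            simp
        · -- c : P4 = q :: P4'
          have hyq : y < q := lo4 q (by simp)
          have hzq : z < q := hb4 q (by simp)
          have fq : q ∉ rs.flatten := hdisj q (by simp)
          rcases P2 with _ | ⟨p2, P2'⟩
          · -- c2 : P2 = []
            rcases P4' with _ | ⟨q2, P4''⟩
            · -- c2ii : P4 = [q]
              have eY : insertTab ((P1 ++ ([] ++ ([] ++ [q]))) :: rs) y
                  = (P1 ++ y :: []) :: insertTab rs q :=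
                tab_bump (by simp) B1y hyq
              have eL2 : insertTab ((P1 ++ y :: []) :: insertTab rs q) x
                  = (P1 ++ x :: []) :: insertTab (insertTab rs q) y :=
                tab_bump (by simp) hb1 hxy
              have eL3 : insertTab ((P1 ++ x :: []) :: insertTab (insertTab rs q) y) z
                  = ((P1 ++ x :: []) ++ [z]) :: insertTab (insertTab rs q) y :=
                tab_app (ltall_app B1z (ltall_cons hxz ltall_nil))
              have eR2 : insertTab ((P1 ++ y :: []) :: insertTab rs q) z
                  = ((P1 ++ y :: []) ++ [z]) :: insertTab rs q :=
                tab_app (ltall_app B1z (ltall_cons hyz ltall_nil))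
              have eR3 : insertTab (((P1 ++ y :: []) ++ [z]) :: insertTab rs q) x
                  = (P1 ++ x :: [z]) :: insertTab (insertTab rs q) y :=
                tab_bump (by simp) hb1 hxy
              rw [eY, eL2, eL3, eR2, eR3]
              simp
            · -- c2i : P4 = q :: q2 :: P4''
              have hqq2 : q < q2 := List.rel_of_pairwise_cons hP4s (a' := q2) (by simp)
              have hzq2 : z < q2 := hb4 q2 (by simp)
              have fq2 : q2 ∉ rs.flatten := hdisj q2 (by simp)
              have eY : insertTab ((P1 ++ ([] ++ ([] ++ q :: q2 :: P4''))) :: rs) y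
                  = (P1 ++ y :: q2 :: P4'') :: insertTab rs q :=
                tab_bump (by simp) B1y hyq
              have eL2 : insertTab ((P1 ++ y :: q2 :: P4'') :: insertTab rs q) x
                  = (P1 ++ x :: q2 :: P4'') :: insertTab (insertTab rs q) y :=
                tab_bump (by simp) hb1 hxy
              have eL3 : insertTab ((P1 ++ x :: q2 :: P4'') :: insertTab (insertTab rs q) y) z
                  = ((P1 ++ [x]) ++ z :: P4'') ::
                    insertTab (insertTab (insertTab rs q) y) q2 :=
                tab_bump (by simp) (ltall_app B1z (ltall_cons hxz ltall_nil)) hzq2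
              have eR2 : insertTab ((P1 ++ y :: q2 :: P4'') :: insertTab rs q) z
                  = ((P1 ++ [y]) ++ z :: P4'') :: insertTab (insertTab rs q) q2 :=
                tab_bump (by simp) (ltall_app B1z (ltall_cons hyz ltall_nil)) hzq2
              have eR3 : insertTab (((P1 ++ [y]) ++ z :: P4'') ::
                    insertTab (insertTab rs q) q2) x
                  = (P1 ++ x :: z :: P4'') :: insertTab (insertTab (insertTab rs q) q2) y :=
                tab_bump (by simp) hb1 hxy
              rw [eY, eL2, eL3, eR2, eR3, IH2 y q q2 hyq hqq2 hyrs fq fq2]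
              simp
          · -- c1 : P2 = p2 :: P2'
            have hxp2 : x < p2 := lo2 p2 (by simp)
            have hp2y : p2 < y := hb2 p2 (by simp)
            have hp2z : p2 < z := hp2y.trans hyz
            have hp2q : p2 < q := hp2y.trans hyq
            have fp2 : p2 ∉ rs.flatten := hdisj p2 (by simp)
            have B2'y : ∀ a ∈ P2', a < y := fun a ha => hb2 a (by simp [ha])
            have B2'z : ∀ a ∈ P2', a < z := fun a ha => (hb2 a (by simp [ha])).trans hyz
            rcases P4' with _ | ⟨q2, P4''⟩
            · -- c1ii : P4 = [q]
              have eY : insertTab ((P1 ++ (p2 :: P2' ++ ([] ++ [q]))) :: rs) y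
                  = ((P1 ++ p2 :: P2') ++ y :: []) :: insertTab rs q :=
                tab_bump (by simp) (ltall_app B1y (ltall_cons hp2y B2'y)) hyq
              have eL2 : insertTab (((P1 ++ p2 :: P2') ++ y :: []) :: insertTab rs q) x
                  = (P1 ++ x :: (P2' ++ y :: [])) :: insertTab (insertTab rs q) p2 :=
                tab_bump (by simp) hb1 hxp2
              have eL3 : insertTab ((P1 ++ x :: (P2' ++ y :: [])) ::
                    insertTab (insertTab rs q) p2) z
                  = ((P1 ++ x :: (P2' ++ y :: [])) ++ [z]) :: insertTab (insertTab rs q) p2 :=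
                tab_app (ltall_app B1z (ltall_cons hxz (ltall_app B2'z
                  (ltall_cons hyz ltall_nil))))
              have eR2 : insertTab (((P1 ++ p2 :: P2') ++ y :: []) :: insertTab rs q) z
                  = (((P1 ++ p2 :: P2') ++ y :: []) ++ [z]) :: insertTab rs q :=
                tab_app (ltall_app (ltall_app B1z (ltall_cons hp2z B2'z))
                  (ltall_cons hyz ltall_nil))
              have eR3 : insertTab ((((P1 ++ p2 :: P2') ++ y :: []) ++ [z]) ::
                    insertTab rs q) x
                  = (P1 ++ x :: (P2' ++ y :: [z])) :: insertTab (insertTab rs q) p2 :=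
                tab_bump (by simp) hb1 hxp2
              rw [eY, eL2, eL3, eR2, eR3]
              simp
            · -- c1i : P4 = q :: q2 :: P4''
              have hqq2 : q < q2 := List.rel_of_pairwise_cons hP4s (a' := q2) (by simp)
              have hzq2 : z < q2 := hb4 q2 (by simp)
              have fq2 : q2 ∉ rs.flatten := hdisj q2 (by simp)
              have eY : insertTab ((P1 ++ (p2 :: P2' ++ ([] ++ q :: q2 :: P4''))) :: rs) y
                  = ((P1 ++ p2 :: P2') ++ y :: q2 :: P4'') :: insertTab rs q :=
                tab_bump (by simp) (ltall_app B1y (ltall_cons hp2y B2'y)) hyq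
              have eL2 : insertTab (((P1 ++ p2 :: P2') ++ y :: q2 :: P4'') ::
                    insertTab rs q) x
                  = (P1 ++ x :: (P2' ++ y :: q2 :: P4'')) :: insertTab (insertTab rs q) p2 :=
                tab_bump (by simp) hb1 hxp2
              have eL3 : insertTab ((P1 ++ x :: (P2' ++ y :: q2 :: P4'')) ::
                    insertTab (insertTab rs q) p2) z
                  = ((P1 ++ x :: (P2' ++ [y])) ++ z :: P4'') ::
                    insertTab (insertTab (insertTab rs q) p2) q2 :=
                tab_bump (by simp) (ltall_app B1z (ltall_cons hxz (ltall_app B2'z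
                  (ltall_cons hyz ltall_nil)))) hzq2
              have eR2 : insertTab (((P1 ++ p2 :: P2') ++ y :: q2 :: P4'') ::
                    insertTab rs q) z
                  = (((P1 ++ p2 :: P2') ++ [y]) ++ z :: P4'') ::
                    insertTab (insertTab rs q) q2 :=
                tab_bump (by simp) (ltall_app (ltall_app B1z (ltall_cons hp2z B2'z))
                  (ltall_cons hyz ltall_nil)) hzq2
              have eR3 : insertTab ((((P1 ++ p2 :: P2') ++ [y]) ++ z :: P4'') ::
                    insertTab (insertTab rs q) q2) x
                  = (P1 ++ x :: (P2' ++ y :: z :: P4'')) ::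
                    insertTab (insertTab (insertTab rs q) q2) p2 :=
                tab_bump (by simp) hb1 hxp2
              rw [eY, eL2, eL3, eR2, eR3, IH2 p2 q q2 hp2q hqq2 fp2 fq fq2]
              simp
      · -- b : P3 = p3 :: P3'
        have hyp3 : y < p3 := lo3 p3 (by simp)
        have hp3z : p3 < z := hb3 p3 (by simp)
        have fp3 : p3 ∉ rs.flatten := hdisj p3 (by simp)
        have B3'z : ∀ a ∈ P3', a < z := fun a ha => hb3 a (by simp [ha])
        rcases P2 with _ | ⟨p2, P2'⟩
        · -- b2 : P2 = []
          rcases P4 with _ | ⟨q, P4'⟩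
          · -- b2ii : P4 = []
            have eY : insertTab ((P1 ++ ([] ++ (p3 :: P3' ++ []))) :: rs) y
                = (P1 ++ y :: (P3' ++ [])) :: insertTab rs p3 :=
              tab_bump (by simp) B1y hyp3
            have eL2 : insertTab ((P1 ++ y :: (P3' ++ [])) :: insertTab rs p3) x
                = (P1 ++ x :: (P3' ++ [])) :: insertTab (insertTab rs p3) y :=
              tab_bump (by simp) hb1 hxy
            have eL3 : insertTab ((P1 ++ x :: (P3' ++ [])) ::
                  insertTab (insertTab rs p3) y) z
                = ((P1 ++ x :: (P3' ++ [])) ++ [z]) :: insertTab (insertTab rs p3) y :=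
              tab_app (ltall_app B1z (ltall_cons hxz (ltall_app B3'z ltall_nil)))
            have eR2 : insertTab ((P1 ++ y :: (P3' ++ [])) :: insertTab rs p3) z
                = ((P1 ++ y :: (P3' ++ [])) ++ [z]) :: insertTab rs p3 :=
              tab_app (ltall_app B1z (ltall_cons hyz (ltall_app B3'z ltall_nil)))
            have eR3 : insertTab (((P1 ++ y :: (P3' ++ [])) ++ [z]) :: insertTab rs p3) x
                = (P1 ++ x :: (P3' ++ [z])) :: insertTab (insertTab rs p3) y :=
              tab_bump (by simp) hb1 hxy
            rw [eY, eL2, eL3, eR2, eR3]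
            simp
          · -- b2i : P4 = q :: P4'
            have hzq : z < q := hb4 q (by simp)
            have hp3q : p3 < q := hp3z.trans hzq
            have fq : q ∉ rs.flatten := hdisj q (by simp)
            have eY : insertTab ((P1 ++ ([] ++ (p3 :: P3' ++ q :: P4'))) :: rs) y
                = (P1 ++ y :: (P3' ++ q :: P4')) :: insertTab rs p3 :=
              tab_bump (by simp) B1y hyp3
            have eL2 : insertTab ((P1 ++ y :: (P3' ++ q :: P4')) :: insertTab rs p3) x
                = (P1 ++ x :: (P3' ++ q :: P4')) :: insertTab (insertTab rs p3) y :=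
              tab_bump (by simp) hb1 hxy
            have eL3 : insertTab ((P1 ++ x :: (P3' ++ q :: P4')) ::
                  insertTab (insertTab rs p3) y) z
                = ((P1 ++ x :: P3') ++ z :: P4') ::
                  insertTab (insertTab (insertTab rs p3) y) q :=
              tab_bump (by simp) (ltall_app B1z (ltall_cons hxz B3'z)) hzq
            have eR2 : insertTab ((P1 ++ y :: (P3' ++ q :: P4')) :: insertTab rs p3) z
                = ((P1 ++ y :: P3') ++ z :: P4') :: insertTab (insertTab rs p3) q :=
              tab_bump (by simp) (ltall_app B1z (ltall_cons hyz B3'z)) hzq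
            have eR3 : insertTab (((P1 ++ y :: P3') ++ z :: P4') ::
                  insertTab (insertTab rs p3) q) x
                = (P1 ++ x :: (P3' ++ z :: P4')) ::
                  insertTab (insertTab (insertTab rs p3) q) y :=
              tab_bump (by simp) hb1 hxy
            rw [eY, eL2, eL3, eR2, eR3, IH2 y p3 q hyp3 hp3q hyrs fp3 fq]
            simp
        · -- b1 : P2 = p2 :: P2'
          have hxp2 : x < p2 := lo2 p2 (by simp)
          have hp2y : p2 < y := hb2 p2 (by simp)
          have hp2z : p2 < z := hp2y.trans hyz
          have hp2p3 : p2 < p3 := hp2y.trans hyp3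
          have fp2 : p2 ∉ rs.flatten := hdisj p2 (by simp)
          have B2'y : ∀ a ∈ P2', a < y := fun a ha => hb2 a (by simp [ha])
          have B2'z : ∀ a ∈ P2', a < z := fun a ha => (hb2 a (by simp [ha])).trans hyz
          rcases P4 with _ | ⟨q, P4'⟩
          · -- b1ii : P4 = []
            have eY : insertTab ((P1 ++ (p2 :: P2' ++ (p3 :: P3' ++ []))) :: rs) y
                = ((P1 ++ p2 :: P2') ++ y :: (P3' ++ [])) :: insertTab rs p3 :=
              tab_bump (by simp) (ltall_app B1y (ltall_cons hp2y B2'y)) hyp3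
            have eL2 : insertTab (((P1 ++ p2 :: P2') ++ y :: (P3' ++ [])) ::
                  insertTab rs p3) x
                = (P1 ++ x :: (P2' ++ y :: (P3' ++ []))) :: insertTab (insertTab rs p3) p2 :=
              tab_bump (by simp) hb1 hxp2
            have eL3 : insertTab ((P1 ++ x :: (P2' ++ y :: (P3' ++ []))) ::
                  insertTab (insertTab rs p3) p2) z
                = ((P1 ++ x :: (P2' ++ y :: (P3' ++ []))) ++ [z]) ::
                  insertTab (insertTab rs p3) p2 :=
              tab_app (ltall_app B1z (ltall_cons hxz (ltall_app B2'z
                (ltall_cons hyz (ltall_app B3'z ltall_nil)))))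
            have eR2 : insertTab (((P1 ++ p2 :: P2') ++ y :: (P3' ++ [])) ::
                  insertTab rs p3) z
                = (((P1 ++ p2 :: P2') ++ y :: (P3' ++ [])) ++ [z]) :: insertTab rs p3 :=
              tab_app (ltall_app (ltall_app B1z (ltall_cons hp2z B2'z))
                (ltall_cons hyz (ltall_app B3'z ltall_nil)))
            have eR3 : insertTab ((((P1 ++ p2 :: P2') ++ y :: (P3' ++ [])) ++ [z]) ::
                  insertTab rs p3) x
                = (P1 ++ x :: (P2' ++ y :: (P3' ++ [z]))) ::
                  insertTab (insertTab rs p3) p2 :=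
              tab_bump (by simp) hb1 hxp2
            rw [eY, eL2, eL3, eR2, eR3]
            simp
          · -- b1i : P4 = q :: P4'
            have hzq : z < q := hb4 q (by simp)
            have hp3q : p3 < q := hp3z.trans hzq
            have fq : q ∉ rs.flatten := hdisj q (by simp)
            have eY : insertTab ((P1 ++ (p2 :: P2' ++ (p3 :: P3' ++ q :: P4'))) :: rs) y
                = ((P1 ++ p2 :: P2') ++ y :: (P3' ++ q :: P4')) :: insertTab rs p3 :=
              tab_bump (by simp) (ltall_app B1y (ltall_cons hp2y B2'y)) hyp3
            have eL2 : insertTab (((P1 ++ p2 :: P2') ++ y :: (P3' ++ q :: P4')) ::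
                  insertTab rs p3) x
                = (P1 ++ x :: (P2' ++ y :: (P3' ++ q :: P4'))) ::
                  insertTab (insertTab rs p3) p2 :=
              tab_bump (by simp) hb1 hxp2
            have eL3 : insertTab ((P1 ++ x :: (P2' ++ y :: (P3' ++ q :: P4'))) ::
                  insertTab (insertTab rs p3) p2) z
                = ((P1 ++ x :: (P2' ++ y :: P3')) ++ z :: P4') ::
                  insertTab (insertTab (insertTab rs p3) p2) q :=
              tab_bump (by simp) (ltall_app B1z (ltall_cons hxz (ltall_app B2'z
                (ltall_cons hyz B3'z)))) hzq
            have eR2 : insertTab (((P1 ++ p2 :: P2') ++ y :: (P3' ++ q :: P4')) ::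
                  insertTab rs p3) z
                = (((P1 ++ p2 :: P2') ++ y :: P3') ++ z :: P4') ::
                  insertTab (insertTab rs p3) q :=
              tab_bump (by simp) (ltall_app (ltall_app B1z (ltall_cons hp2z B2'z))
                (ltall_cons hyz B3'z)) hzq
            have eR3 : insertTab ((((P1 ++ p2 :: P2') ++ y :: P3') ++ z :: P4') ::
                  insertTab (insertTab rs p3) q) x
                = (P1 ++ x :: (P2' ++ y :: (P3' ++ z :: P4'))) ::
                  insertTab (insertTab (insertTab rs p3) q) p2 :=
              tab_bump (by simp) hb1 hxp2
            rw [eY, eL2, eL3, eR2, eR3, IH2 p2 p3 q hp2p3 hp3q fp2 fp3 fq]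
            simp


inductive KStep : List ℕ → List ℕ → Prop
  | k1 (l r : List ℕ) (x y z : ℕ) (hxy : x < y) (hyz : y < z) :
      KStep (l ++ [x, z, y] ++ r) (l ++ [z, x, y] ++ r)
  | k2 (l r : List ℕ) (x y z : ℕ) (hxy : x < y) (hyz : y < z) :
      KStep (l ++ [y, x, z] ++ r) (l ++ [y, z, x] ++ r)

def KEq : List ℕ → List ℕ → Prop := Relation.EqvGen KStep

lemma KStep_perm {w w' : List ℕ} (h : KStep w w') : w.Perm w' := by
  rcases h with ⟨l, r, x, y, z, hxy, hyz⟩ | ⟨l, r, x, y, z, hxy, hyz⟩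
  · exact ((List.Perm.swap z x [y]).append_left l).append_right r
  · exact (((List.Perm.swap z x []).cons y).append_left l).append_right r

lemma KEq_perm {w w' : List ℕ} (h : KEq w w') : w.Perm w' := by
  induction h with
  | rel _ _ h => exact KStep_perm h
  | refl => exact List.Perm.refl _
  | symm _ _ _ ih => exact ih.symm
  | trans _ _ _ _ _ ih1 ih2 => exact ih1.trans ih2

lemma KEq.rfl {w : List ℕ} : KEq w w := Relation.EqvGen.refl w

lemma KEq.of_step {w w' : List ℕ} (h : KStep w w') : KEq w w' := Relation.EqvGen.rel _ _ h

lemma KEq.symm' {w w' : List ℕ} (h : KEq w w') : KEq w' w := Relation.EqvGen.symm _ _ h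

lemma KEq.trans' {w₁ w₂ w₃ : List ℕ} (h1 : KEq w₁ w₂) (h2 : KEq w₂ w₃) : KEq w₁ w₃ :=
  Relation.EqvGen.trans _ _ _ h1 h2

lemma KStep_append_left {w w' : List ℕ} (c : List ℕ) (h : KStep w w') :
    KStep (c ++ w) (c ++ w') := by
  rcases h with ⟨l, r, x, y, z, hxy, hyz⟩ | ⟨l, r, x, y, z, hxy, hyz⟩
  · have := KStep.k1 (c ++ l) r x y z hxy hyz
    simpa using this
  · have := KStep.k2 (c ++ l) r x y z hxy hyz
    simpa using this

lemma KStep_append_right {w w' : List ℕ} (c : List ℕ) (h : KStep w w') :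
    KStep (w ++ c) (w' ++ c) := by
  rcases h with ⟨l, r, x, y, z, hxy, hyz⟩ | ⟨l, r, x, y, z, hxy, hyz⟩
  · have := KStep.k1 l (r ++ c) x y z hxy hyz
    simpa using this
  · have := KStep.k2 l (r ++ c) x y z hxy hyz
    simpa using this

lemma KEq_append_left {w w' : List ℕ} (c : List ℕ) (h : KEq w w') :
    KEq (c ++ w) (c ++ w') := by
  induction h with
  | rel _ _ h => exact KEq.of_step (KStep_append_left c h)
  | refl => exact KEq.rfl
  | symm _ _ _ ih => exact ih.symm'
  | trans _ _ _ _ _ ih1 ih2 => exact ih1.trans' ih2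

lemma KEq_append_right {w w' : List ℕ} (c : List ℕ) (h : KEq w w') :
    KEq (w ++ c) (w' ++ c) := by
  induction h with
  | rel _ _ h => exact KEq.of_step (KStep_append_right c h)
  | refl => exact KEq.rfl
  | symm _ _ _ ih => exact ih.symm'
  | trans _ _ _ _ _ ih1 ih2 => exact ih1.trans' ih2

lemma rsP_append (w t : List ℕ) : rsP (w ++ t) = t.foldl insertTab (rsP w) :=
  List.foldl_append ..

lemma rsP_eq_of_KStep {w w' : List ℕ} (h : KStep w w') (hnd : w.Nodup) :
    rsP w = rsP w' := by
  rcases h with ⟨l, r, x, y, z, hxy, hyz⟩ | ⟨l, r, x, y, z, hxy, hyz⟩ <;>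
  · have hnd2 : _ := hnd.of_append_left
    have hndl : l.Nodup := hnd2.of_append_left
    have hdisj := List.disjoint_of_nodup_append hnd2
    have hv := rsP_valid l hndl
    have hfl : (rsP l).flatten.Nodup := hv.2.nodup_iff.2 hndl
    have hx : x ∉ (rsP l).flatten := fun h => hdisj (hv.2.mem_iff.1 h) (by simp)
    have hy : y ∉ (rsP l).flatten := fun h => hdisj (hv.2.mem_iff.1 h) (by simp)
    have hz : z ∉ (rsP l).flatten := fun h => hdisj (hv.2.mem_iff.1 h) (by simp)
    have key := knuth_core (rsP l) hv.1 hfl x y z hxy hyz hx hy hz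
    simp only [rsP_append, List.foldl_append, List.foldl_cons, List.foldl_nil]
    first
    | exact congrArg (fun T => List.foldl insertTab T r) key.1
    | exact congrArg (fun T => List.foldl insertTab T r) key.2

lemma rsP_eq_of_KEq : ∀ {w w' : List ℕ}, KEq w w' → w.Nodup → rsP w = rsP w' := by
  intro w w' h
  induction h with
  | rel _ _ h => exact fun hnd => rsP_eq_of_KStep h hnd
  | refl => exact fun _ => rfl
  | symm a b h ih => exact fun hnd => (ih ((KEq_perm h).nodup_iff.2 hnd)).symm
  | trans a b c h1 h2 ih1 ih2 =>
      exact fun hnd => (ih1 hnd).trans (ih2 ((KEq_perm h1).nodup_iff.1 hnd))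

lemma KEq_of_eq {a b : List ℕ} (h : a = b) : KEq a b := h ▸ KEq.rfl

lemma KEq_congr {a b a' b' : List ℕ} (h : KEq a b) (ha : a = a') (hb : b = b') :
    KEq a' b' := ha ▸ hb ▸ h

lemma phase1 (s : ℕ) (d : List ℕ) :
    ∀ (B : List ℕ) (c : List ℕ) (p : ℕ), B.Pairwise (· < ·) → s < p → (∀ b ∈ B, p < b) →
    KEq (c ++ p :: (B ++ s :: d)) (c ++ p :: s :: (B ++ d)) := by
  intro B
  induction B with
  | nil => intro c p _ _ _; exact KEq_of_eq (by simp)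
  | cons g B' ihB =>
    intro c p hs hsp hpB
    have hpg : p < g := hpB g (by simp)
    have step1 : KEq (c ++ p :: (g :: B' ++ s :: d)) (c ++ p :: (g :: s :: (B' ++ d))) := by
      have := ihB (c ++ [p]) g hs.of_cons (hsp.trans hpg)
        (fun b hb => List.rel_of_pairwise_cons hs (a' := b) hb)
      exact KEq_congr this (by simp) (by simp)
    have step2 : KEq (c ++ p :: (g :: s :: (B' ++ d))) (c ++ p :: s :: (g :: B' ++ d)) := by
      have hk : KStep (c ++ [p, s, g] ++ (B' ++ d)) (c ++ [p, g, s] ++ (B' ++ d)) :=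
        KStep.k2 c (B' ++ d) s p g hsp hpg
      exact KEq_congr (KEq.of_step hk).symm' (by simp) (by simp)
    exact KEq_congr (step1.trans' step2) (by simp) (by simp)

lemma phase2 :
    ∀ (A : List ℕ) (c d : List ℕ) (b w : ℕ), A.Pairwise (· < ·) → (∀ a ∈ A, a < w) → w < b →
    KEq (c ++ A ++ b :: w :: d) (c ++ b :: (A ++ w :: d)) := by
  intro A
  induction A with
  | nil => intro c d b w _ _ _; exact KEq_of_eq (by simp)
  | cons a A' ihA =>
    intro c d b w hs hAw hwb
    have haw : a < w := hAw a (by simp)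
    have step1 : KEq (c ++ (a :: A') ++ b :: w :: d) (c ++ a :: b :: (A' ++ w :: d)) := by
      have := ihA (c ++ [a]) d b w hs.of_cons (fun t ht => hAw t (by simp [ht])) hwb
      exact KEq_congr this (by simp) (by simp)
    have step2 : KEq (c ++ a :: b :: (A' ++ w :: d)) (c ++ b :: (a :: A' ++ w :: d)) := by
      rcases A' with _ | ⟨a2, A''⟩
      · have hk : KStep (c ++ [a, b, w] ++ d) (c ++ [b, a, w] ++ d) :=
          KStep.k1 c d a w b haw hwb
        exact KEq_congr (KEq.of_step hk) (by simp) (by simp)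
      · have ha2 : a < a2 := List.rel_of_pairwise_cons hs (a' := a2) (by simp)
        have ha2w : a2 < w := hAw a2 (by simp)
        have hk : KStep (c ++ [a, b, a2] ++ (A'' ++ w :: d)) (c ++ [b, a, a2] ++ (A'' ++ w :: d)) :=
          KStep.k1 c (A'' ++ w :: d) a a2 b ha2 (ha2w.trans hwb)
        exact KEq_congr (KEq.of_step hk) (by simp) (by simp)
    exact step1.trans' step2

lemma keq_bump (c A B : List ℕ) (s b : ℕ) (hAs : A.Pairwise (· < ·)) (hBs : B.Pairwise (· < ·))
    (hA : ∀ a ∈ A, a < s) (hsb : s < b) (hbB : ∀ t ∈ B, b < t) :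
    KEq (c ++ (A ++ b :: B) ++ [s]) (c ++ b :: (A ++ s :: B)) := by
  have h1 : KEq ((c ++ A) ++ b :: (B ++ s :: [])) ((c ++ A) ++ b :: s :: (B ++ [])) :=
    phase1 s [] B (c ++ A) b hBs hsb hbB
  have h2 : KEq (c ++ A ++ b :: s :: B) (c ++ b :: (A ++ s :: B)) :=
    phase2 A c B b s hAs hA hsb
  exact (KEq_congr h1 (by simp) (by simp)).trans' h2

lemma rword_cons (r : List ℕ) (rs : List (List ℕ)) : rword (r :: rs) = rword rs ++ r := by
  simp [rword]

lemma keq_rword_insert : ∀ (T : List (List ℕ)), RowsSorted T → T.flatten.Nodup →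
    ∀ s, s ∉ T.flatten → KEq (rword T ++ [s]) (rword (insertTab T s)) := by
  intro T
  induction T with
  | nil => intro _ _ s _; exact KEq_of_eq (by simp [rword, insertTab])
  | cons R rs ih =>
    intro hT hnd s hs
    have hRs : R.Pairwise (· < ·) := hT R (by simp)
    have hrs : RowsSorted rs := fun r hr => hT r (by simp [hr])
    simp only [List.flatten_cons] at hnd hs
    have hndrs : rs.flatten.Nodup := (List.nodup_append.1 hnd).2.1
    have hdisj : ∀ a ∈ R, a ∉ rs.flatten := fun a ha h => (List.nodup_append.1 hnd).2.2 a ha a h rfl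
    have hsR : s ∉ R := fun h => hs (List.mem_append.2 (Or.inl h))
    obtain ⟨A, B, rfl, hA, hB⟩ := sorted_split s R hRs hsR
    have hsorted := sorted_append_iff.1 hRs
    rcases B with _ | ⟨b, B'⟩
    · have hcond : ∀ a ∈ A ++ [], a < s := by
        intro a ha
        rcases List.mem_append.1 ha with h | h
        · exact hA a h
        · exact absurd h (List.not_mem_nil (a := a))
      rw [tab_app hcond]
      simp only [rword_cons]
      exact KEq_of_eq (by simp)
    · have hsb : s < b := hB b (by simp)
      rw [tab_bump rfl hA hsb]
      simp only [rword_cons]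
      have h1 : KEq ((rword rs ++ (A ++ b :: B')) ++ [s]) (rword rs ++ b :: (A ++ s :: B')) :=
        keq_bump (rword rs) A B' s b hsorted.1 hsorted.2.1.of_cons hA hsb
          (fun t ht => List.rel_of_pairwise_cons hsorted.2.1 (a' := t) ht)
      have h2 : KEq (rword rs ++ [b]) (rword (insertTab rs b)) :=
        ih hrs hndrs b (fun h => hdisj b (by simp) h)
      have h3 : KEq ((rword rs ++ [b]) ++ (A ++ s :: B'))
          (rword (insertTab rs b) ++ (A ++ s :: B')) :=
        KEq_append_right _ h2
      exact h1.trans' (KEq_congr h3 (by simp) rfl)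

lemma keq_rword : ∀ (w : List ℕ), w.Nodup → KEq w (rword (rsP w)) := by
  intro w
  induction w using List.reverseRecOn with
  | nil => exact fun _ => KEq_of_eq (by simp [rsP, rword])
  | append_singleton w s ih =>
    intro hnd
    have hndw : w.Nodup := hnd.of_append_left
    have hv := rsP_valid w hndw
    have hsw : s ∉ w := by
      have := List.disjoint_of_nodup_append hnd
      exact fun h => this h (by simp)
    have hsfl : s ∉ (rsP w).flatten := fun h => hsw (hv.2.mem_iff.1 h)
    have hfl : (rsP w).flatten.Nodup := hv.2.nodup_iff.2 hndw
    have h1 : KEq (w ++ [s]) (rword (rsP w) ++ [s]) := KEq_append_right [s] (ih hndw)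
    have h2 := keq_rword_insert (rsP w) hv.1 hfl s hsfl
    have h3 : rsP (w ++ [s]) = insertTab (rsP w) s := by
      simp [rsP_append]
    rw [h3]
    exact h1.trans' h2

lemma keq_of_rsP_eq {x y : List ℕ} (hx : x.Nodup) (hy : y.Nodup) (h : rsP x = rsP y) :
    KEq x y :=
  (keq_rword x hx).trans' (KEq_congr (keq_rword y hy).symm' (by rw [h]) rfl)

lemma rsP_prefix_congr (c : List ℕ) {x y : List ℕ} (hx : x.Nodup) (hy : y.Nodup)
    (h : rsP x = rsP y) (hcx : (c ++ x).Nodup) : rsP (c ++ x) = rsP (c ++ y) :=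
  rsP_eq_of_KEq (KEq_append_left c (keq_of_rsP_eq hx hy h)) hcx

lemma KStep_filter (n : ℕ) {w w' : List ℕ} (h : KStep w w') :
    KEq (w.filter (· < n)) (w'.filter (· < n)) := by
  rcases h with ⟨l, r, x, y, z, hxy, hyz⟩ | ⟨l, r, x, y, z, hxy, hyz⟩
  · by_cases hz : z < n
    · have hx : x < n := (hxy.trans hyz).trans hz
      have hy : y < n := hyz.trans hz
      have hk : KStep (l.filter (· < n) ++ [x, z, y] ++ r.filter (· < n))
          (l.filter (· < n) ++ [z, x, y] ++ r.filter (· < n)) := KStep.k1 _ _ x y z hxy hyz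
      exact KEq_congr (KEq.of_step hk)
        (by simp [List.filter_append, hx, hy, hz])
        (by simp [List.filter_append, hx, hy, hz])
    · exact KEq_of_eq (by by_cases hy : y < n <;> by_cases hx : x < n <;>
        simp [List.filter_append, hx, hy, hz])
  · by_cases hz : z < n
    · have hx : x < n := (hxy.trans hyz).trans hz
      have hy : y < n := hyz.trans hz
      have hk : KStep (l.filter (· < n) ++ [y, x, z] ++ r.filter (· < n))
          (l.filter (· < n) ++ [y, z, x] ++ r.filter (· < n)) := KStep.k2 _ _ x y z hxy hyz
      exact KEq_congr (KEq.of_step hk)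
        (by simp [List.filter_append, hx, hy, hz])
        (by simp [List.filter_append, hx, hy, hz])
    · exact KEq_of_eq (by by_cases hy : y < n <;> by_cases hx : x < n <;>
        simp [List.filter_append, hx, hy, hz])

lemma KEq_filter (n : ℕ) : ∀ {w w' : List ℕ}, KEq w w' →
    KEq (w.filter (· < n)) (w'.filter (· < n)) := by
  intro w w' h
  induction h with
  | rel _ _ h => exact KStep_filter n h
  | refl => exact KEq.rfl
  | symm _ _ _ ih => exact ih.symm'
  | trans _ _ _ _ _ ih1 ih2 => exact ih1.trans' ih2

lemma rsP_filter_congr (n : ℕ) {x y : List ℕ} (hx : x.Nodup) (hy : y.Nodup)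
    (h : rsP x = rsP y) : rsP (x.filter (· < n)) = rsP (y.filter (· < n)) :=
  rsP_eq_of_KEq (KEq_filter n (keq_of_rsP_eq hx hy h)) (hx.filter _)


open List (Sublist)
local infixl:50 " <+' " => List.Sublist

lemma mem_invSet_iff {w : List ℕ} {p : ℕ × ℕ} :
    p ∈ invSet w ↔ p.2 < p.1 ∧ [p.1, p.2] <+' w := by
  constructor
  · rintro ⟨hlt, k, l, hkl, hk, hl⟩
    refine ⟨hlt, ?_⟩
    obtain ⟨hkb, hkv⟩ := List.getElem?_eq_some_iff.1 hk
    have hi : p.2 ∈ w.drop (k + 1) := by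
      have hd : (w.drop (k + 1))[l - (k + 1)]? = some p.2 := by
        rw [List.getElem?_drop]
        rwa [Nat.add_sub_cancel' (by omega : k + 1 ≤ l)]
      exact List.mem_iff_getElem?.2 ⟨_, hd⟩
    have h1 : [p.1, p.2] <+' w[k] :: w.drop (k + 1) := by
      rw [hkv]
      exact (List.singleton_sublist.2 hi).cons₂ _
    have h2 : w[k] :: w.drop (k + 1) <+' w := by
      conv_rhs => rw [← List.take_append_drop k w, ← List.getElem_cons_drop hkb]
      exact List.sublist_append_right _ _
    exact h1.trans h2
  · rintro ⟨hlt, hsub⟩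
    refine ⟨hlt, ?_⟩
    rw [List.cons_sublist_iff] at hsub
    obtain ⟨r1, r2, rfl, hj, hi2⟩ := hsub
    rw [List.singleton_sublist] at hi2
    obtain ⟨k, hk⟩ := List.mem_iff_getElem?.1 hj
    obtain ⟨m, hm⟩ := List.mem_iff_getElem?.1 hi2
    have hkb : k < r1.length := (List.getElem?_eq_some_iff.1 hk).1
    refine ⟨k, r1.length + m, by omega, ?_, ?_⟩
    · rw [List.getElem?_append_left hkb]; exact hk
    · rw [List.getElem?_append_right (by omega)]; simpa using hm

lemma invSet_append {s t : List ℕ} :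
    invSet (s ++ t) = invSet s ∪ invSet t ∪ {p | p.2 < p.1 ∧ p.1 ∈ s ∧ p.2 ∈ t} := by
  ext p
  simp only [Set.mem_union, Set.mem_setOf_eq, mem_invSet_iff]
  constructor
  · rintro ⟨hlt, hsub⟩
    rw [List.sublist_append_iff] at hsub
    obtain ⟨l1, l2, heq, h1, h2⟩ := hsub
    rcases l1 with _ | ⟨a, _ | ⟨b, _ | ⟨e, l⟩⟩⟩
    · simp only [List.nil_append] at heq
      exact Or.inl (Or.inr ⟨hlt, heq ▸ h2⟩)
    · simp only [List.cons_append, List.nil_append, List.cons.injEq] at heq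
      obtain ⟨rfl, heq2⟩ := heq
      have : p.2 ∈ l2 := by rw [← heq2]; simp
      exact Or.inr ⟨hlt, List.singleton_sublist.1 h1, h2.subset this⟩
    · simp only [List.cons_append, List.cons.injEq] at heq
      obtain ⟨rfl, rfl, heq3⟩ := heq
      exact Or.inl (Or.inl ⟨hlt, h1⟩)
    · simp at heq
  · rintro ((⟨hlt, h⟩ | ⟨hlt, h⟩) | ⟨hlt, h1, h2⟩)
    · exact ⟨hlt, h.trans (List.sublist_append_left s t)⟩
    · exact ⟨hlt, h.trans (List.sublist_append_right s t)⟩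
    · exact ⟨hlt, List.sublist_append_iff.2
        ⟨[p.1], [p.2], rfl, List.singleton_sublist.2 h1, List.singleton_sublist.2 h2⟩⟩

lemma invSet_filter_lt (n : ℕ) (w : List ℕ) :
    invSet (w.filter (· < n)) = invSet w ∩ {p | p.1 < n} := by
  ext p
  simp only [mem_invSet_iff, Set.mem_inter_iff, Set.mem_setOf_eq]
  constructor
  · rintro ⟨hlt, hsub⟩
    have hmem : p.1 ∈ w.filter (· < n) := hsub.subset (by simp)
    have h1n : p.1 < n := by simpa using (List.mem_filter.1 hmem).2
    exact ⟨⟨hlt, hsub.trans (List.filter_sublist (l := w))⟩, h1n⟩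
  · rintro ⟨⟨hlt, hsub⟩, h1⟩
    refine ⟨hlt, ?_⟩
    have h2 : p.2 < n := hlt.trans h1
    have := List.Sublist.filter (fun x => decide (x < n)) hsub
    simpa [List.filter, h1, h2] using this

lemma invSet_map_mono (n : ℕ) {c d : List ℕ} (h : weakLe c d) :
    weakLe (c.map (· + n)) (d.map (· + n)) := by
  intro p hp
  obtain ⟨hlt, hsub⟩ := mem_invSet_iff.1 hp
  rw [List.sublist_map_iff] at hsub
  obtain ⟨l', hl', heq⟩ := hsub
  rcases l' with _ | ⟨a, _ | ⟨b, _ | ⟨e, l⟩⟩⟩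
  · simp at heq
  · simp at heq
  · simp only [List.map_cons, List.map_nil, List.cons.injEq, and_true] at heq
    obtain ⟨h1, h2⟩ := heq
    have hba : b < a := by omega
    have hmem : (a, b) ∈ invSet d := h (mem_invSet_iff.2 ⟨hba, hl'⟩)
    obtain ⟨-, hsub'⟩ := mem_invSet_iff.1 hmem
    refine mem_invSet_iff.2 ⟨hlt, ?_⟩
    have := hsub'.map (· + n)
    simpa [← h1, ← h2] using this
  · simp at heq

lemma invSet_sorted_empty {w : List ℕ} (hw : w.Pairwise (· < ·)) : invSet w = ∅ := by
  ext p
  simp only [mem_invSet_iff, Set.mem_empty_iff_false, iff_false, not_and]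
  intro hlt hsub
  have : List.Pairwise (· < ·) [p.1, p.2] := hw.sublist hsub
  have := List.rel_of_pairwise_cons this (a' := p.2) (by simp)
  omega

lemma invSet_range' (s n : ℕ) : invSet (List.range' s n) = ∅ :=
  invSet_sorted_empty (by
    have := List.pairwise_lt_range' (s := s) (n := n) 1 (by omega)
    simpa using this)



/-! ### perm word basics -/

lemma pw_nodup {w : List ℕ} (h : IsPermWord w) : w.Nodup :=
  h.nodup_iff.2 (List.nodup_range)

lemma pw_mem {w : List ℕ} (h : IsPermWord w) {a : ℕ} : a ∈ w ↔ a < w.length := by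
  rw [h.mem_iff, List.mem_range]

lemma range_filter_lt (N n : ℕ) : (List.range N).filter (· < n) = List.range (min N n) := by
  induction N with
  | zero => simp
  | succ N ih =>
    rw [List.range_succ, List.filter_append, ih]
    by_cases h : N < n
    · have h1 : min (N + 1) n = min N n + 1 := by omega
      have h2 : min N n = N := by omega
      rw [h1, List.range_succ]
      simp [h2, h]
    · have h1 : min (N + 1) n = min N n := by omega
      simp [h1, h]

def normWord (n : ℕ) (w : List ℕ) : List ℕ :=
  w.filter (· < n) ++ List.range' (w.filter (· < n)).length (n - (w.filter (· < n)).length)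

lemma filter_perm_range {w : List ℕ} (h : IsPermWord w) (n : ℕ) :
    (w.filter (· < n)).Perm (List.range (min w.length n)) := by
  have := h.filter (· < n)
  rwa [range_filter_lt] at this

lemma filter_length {w : List ℕ} (h : IsPermWord w) (n : ℕ) :
    (w.filter (· < n)).length = min w.length n := by
  rw [(filter_perm_range h n).length_eq, List.length_range]

lemma normWord_length {w : List ℕ} (h : IsPermWord w) (n : ℕ) : (normWord n w).length = n := by
  simp only [normWord, List.length_append, List.length_range', filter_length h n]
  omega

lemma normWord_isPerm {w : List ℕ} (h : IsPermWord w) (n : ℕ) : IsPermWord (normWord n w) := by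
  unfold IsPermWord
  rw [normWord_length h n]
  set k := min w.length n with hk
  have h1 : (w.filter (· < n)).Perm (List.range k) := filter_perm_range h n
  have hke : (w.filter (· < n)).length = k := filter_length h n
  have h2 : List.range k ++ List.range' k (n - k) = List.range n := by
    rw [List.range_eq_range' (n := k), List.range_eq_range' (n := n)]
    have h3 := List.range'_append (s := 0) (m := k) (n := n - k) (step := 1)
    have h4 : k + (n - k) = n := by omega
    simpa [h4] using h3
  unfold normWord
  rw [hke]
  exact (h1.append_right _).trans (by rw [h2])

lemma normWord_eq_self {w : List ℕ} (h : IsPermWord w) {n : ℕ} (hn : w.length = n) :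
    normWord n w = w := by
  have hf : w.filter (· < n) = w := List.filter_eq_self.2 fun a ha => by
    simp only [decide_eq_true_eq]
    have := (pw_mem h).1 ha
    omega
  simp [normWord, hf, hn]

lemma invSet_normWord {w : List ℕ} (h : IsPermWord w) (n : ℕ) :
    invSet (normWord n w) = invSet w ∩ {p | p.1 < n} := by
  unfold normWord
  rw [invSet_append, invSet_range', invSet_filter_lt]
  have hcross : {p : ℕ × ℕ | p.2 < p.1 ∧ p.1 ∈ w.filter (· < n) ∧
      p.2 ∈ List.range' (w.filter (· < n)).length (n - (w.filter (· < n)).length)} = ∅ := by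
    ext p
    simp only [Set.mem_setOf_eq, Set.mem_empty_iff_false, iff_false, not_and]
    intro hlt h1 h2
    have hm1 : p.1 ∈ List.range (min w.length n) := (filter_perm_range h n).subset h1
    rw [List.mem_range] at hm1
    rw [List.mem_range'_1, filter_length h n] at h2
    omega
  rw [hcross]
  simp

lemma weakLe_normWord {a b : List ℕ} (ha : IsPermWord a) (hb : IsPermWord b)
    (h : weakLe a b) (n : ℕ) : weakLe (normWord n a) (normWord n b) := by
  unfold weakLe
  rw [invSet_normWord ha, invSet_normWord hb]
  exact fun p hp => ⟨h hp.1, hp.2⟩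

/-! ### rsP shift equivariance -/

lemma insertRow_map (n x : ℕ) : ∀ (w : List ℕ),
    insertRow (x + n) (w.map (· + n)) =
      ((insertRow x w).1.map (· + n), Option.map (· + n) (insertRow x w).2)
  | [] => by simp [insertRow]
  | y :: ys => by
    by_cases h : x < y
    · simp [insertRow, h, Nat.add_lt_add_right h n]
    · have h' : ¬ (x + n < y + n) := by omega
      simp [insertRow, h, h', insertRow_map n x ys]

lemma insertTab_map (n : ℕ) : ∀ (T : List (List ℕ)) (x : ℕ),
    insertTab (T.map (List.map (· + n))) (x + n) = (insertTab T x).map (List.map (· + n))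
  | [], x => by simp [insertTab]
  | r :: rs, x => by
    rcases hr : insertRow x r with ⟨r', o⟩
    have hmap := insertRow_map n x r
    rw [hr] at hmap
    rcases o with _ | y
    · rw [List.map_cons, insertTab_cons_none hmap, insertTab_cons_none hr, List.map_cons]
    · rw [List.map_cons, insertTab_cons_some hmap, insertTab_cons_some hr, List.map_cons,
        insertTab_map n rs y]

lemma rsP_map (n : ℕ) (w : List ℕ) : rsP (w.map (· + n)) = (rsP w).map (List.map (· + n)) := by
  induction w using List.reverseRecOn with
  | nil => simp [rsP]
  | append_singleton w x ih =>
    rw [List.map_append, rsP_append, rsP_append]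
    simp only [List.map_cons, List.map_nil, List.foldl_cons, List.foldl_nil]
    rw [ih, insertTab_map]

/-! ### weakLe and triangle -/

lemma weakLe_triangle_right {v a b : List ℕ} (ha : IsPermWord a) (hb : IsPermWord b)
    (hlen : a.length = b.length) (h : weakLe a b) : weakLe (triangle v a) (triangle v b) := by
  unfold triangle weakLe
  rw [invSet_append, invSet_append, hlen]
  rintro p ((hp | hp) | hp)
  · exact Or.inl (Or.inl hp)
  · exact Or.inl (Or.inr (h hp))
  · exact Or.inr ⟨hp.1, hp.2.1, (pw_mem hb).2 (hlen ▸ (pw_mem ha).1 hp.2.2)⟩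

lemma weakLe_triangle_left {c d u : List ℕ} (hc : IsPermWord c) (hd : IsPermWord d)
    (hlen : c.length = d.length) (h : weakLe c d) : weakLe (triangle c u) (triangle d u) := by
  unfold triangle weakLe
  rw [invSet_append, invSet_append]
  rintro p ((hp | hp) | hp)
  · exact Or.inl (Or.inl (invSet_map_mono u.length h hp))
  · exact Or.inl (Or.inr hp)
  · refine Or.inr ⟨hp.1, ?_, hp.2.2⟩
    obtain ⟨x, hx, hxe⟩ := List.mem_map.1 hp.2.1
    exact List.mem_map.2 ⟨x, (pw_mem hd).2 (hlen ▸ (pw_mem hc).1 hx), hxe⟩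

lemma triangle_isPerm {v u : List ℕ} (hv : IsPermWord v) (hu : IsPermWord u) :
    IsPermWord (triangle v u) := by
  unfold IsPermWord triangle
  simp only [List.length_append, List.length_map]
  set n := u.length with hn
  have h1 : (v.map (· + n)).Perm ((List.range v.length).map (· + n)) := hv.map _
  have h2 : (List.range v.length).map (· + n) = List.range' n v.length := by
    rw [List.range'_eq_map_range]
    exact (List.map_congr_left (fun a _ => Nat.add_comm a n)).symm ▸ rfl
  have h3 : List.range n ++ List.range' n v.length = List.range (n + v.length) := by
    rw [List.range_eq_range' (n := n), List.range_eq_range' (n := n + v.length)]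
    have h4 := List.range'_append (s := 0) (m := n) (n := v.length) (step := 1)
    simpa [Nat.add_comm] using h4
  refine ((h1.trans (by rw [h2])).append hu).trans ?_
  refine List.perm_append_comm.trans ?_
  rw [h3, Nat.add_comm]

lemma perm_of_rsP_eq {a u : List ℕ} (ha : a.Nodup) (hu : u.Nodup) (h : rsP a = rsP u) :
    a.Perm u :=
  (rsP_valid a ha).2.symm.trans (by rw [h]; exact (rsP_valid u hu).2)

lemma rsP_normWord_congr (n : ℕ) {a b : List ℕ} (ha : IsPermWord a) (hb : IsPermWord b)
    (hab : rsP a = rsP b) : rsP (normWord n a) = rsP (normWord n b) := by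
  have h1 : rsP (a.filter (· < n)) = rsP (b.filter (· < n)) :=
    rsP_filter_congr n (pw_nodup ha) (pw_nodup hb) hab
  have hk : (a.filter (· < n)).length = (b.filter (· < n)).length :=
    (perm_of_rsP_eq ((pw_nodup ha).filter _) ((pw_nodup hb).filter _) h1).length_eq
  unfold normWord
  rw [rsP_append, rsP_append, h1, hk]

lemma key_eq_u (v : List ℕ) (hv : IsPermWord v) (n : ℕ) {a b : List ℕ}
    (ha : IsPermWord a) (hb : IsPermWord b) (hab : rsP a = rsP b) :
    rsP (triangle v (normWord n a)) = rsP (triangle v (normWord n b)) := by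
  have hfa : rsP (normWord n a) = rsP (normWord n b) := rsP_normWord_congr n ha hb hab
  have hla : (normWord n a).length = n := normWord_length ha n
  have hlb : (normWord n b).length = n := normWord_length hb n
  have hnd : (v.map (· + n) ++ normWord n a).Nodup := by
    have := pw_nodup (triangle_isPerm hv (normWord_isPerm ha n))
    unfold triangle at this
    rwa [hla] at this
  unfold triangle
  rw [hla, hlb]
  exact rsP_prefix_congr _ (pw_nodup (normWord_isPerm ha n)) (pw_nodup (normWord_isPerm hb n))
    hfa hnd

lemma key_eq_v (u : List ℕ) (m : ℕ) {c d : List ℕ}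
    (hc : IsPermWord c) (hd : IsPermWord d) (hcd : rsP c = rsP d) :
    rsP (triangle (normWord m c) u) = rsP (triangle (normWord m d) u) := by
  have hf : rsP (normWord m c) = rsP (normWord m d) := rsP_normWord_congr m hc hd hcd
  unfold triangle
  rw [rsP_append, rsP_append, rsP_map, rsP_map, hf]

/-! ### chain lifting -/

lemma lift_u (v : List ℕ) (hv : IsPermWord v) (n : ℕ) {T T' : List (List ℕ)}
    (h : taskinLe T T') :
    ∀ a b : List ℕ, IsPermWord a → IsPermWord b → rsP a = T → rsP b = T' →
    taskinLe (rsP (triangle v (normWord n a))) (rsP (triangle v (normWord n b))) := by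
  induction h with
  | refl =>
    intro a b ha hb hra hrb
    rw [key_eq_u v hv n ha hb (hra.trans hrb.symm)]
    exact Relation.ReflTransGen.refl
  | tail h' step ih =>
    intro a b ha hb hra hrb
    obtain ⟨p, q, hp, hq, hrp, hrq, hw⟩ := step
    have ih' := ih a p ha hp hra hrp
    have stepT : taskinLe (rsP (triangle v (normWord n p))) (rsP (triangle v (normWord n q))) := by
      apply Relation.ReflTransGen.single
      refine ⟨triangle v (normWord n p), triangle v (normWord n q),
        triangle_isPerm hv (normWord_isPerm hp n), triangle_isPerm hv (normWord_isPerm hq n),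
        rfl, rfl, ?_⟩
      exact weakLe_triangle_right (normWord_isPerm hp n) (normWord_isPerm hq n)
        (by rw [normWord_length hp n, normWord_length hq n]) (weakLe_normWord hp hq hw n)
    have last : rsP (triangle v (normWord n q)) = rsP (triangle v (normWord n b)) :=
      key_eq_u v hv n hq hb (hrq.trans hrb.symm)
    exact (ih'.trans stepT).trans (last ▸ Relation.ReflTransGen.refl)

lemma lift_v (u : List ℕ) (hu : IsPermWord u) (m : ℕ) {T T' : List (List ℕ)}
    (h : taskinLe T T') :
    ∀ c d : List ℕ, IsPermWord c → IsPermWord d → rsP c = T → rsP d = T' →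
    taskinLe (rsP (triangle (normWord m c) u)) (rsP (triangle (normWord m d) u)) := by
  induction h with
  | refl =>
    intro c d hc hd hrc hrd
    rw [key_eq_v u m hc hd (hrc.trans hrd.symm)]
    exact Relation.ReflTransGen.refl
  | tail h' step ih =>
    intro c d hc hd hrc hrd
    obtain ⟨p, q, hp, hq, hrp, hrq, hw⟩ := step
    have ih' := ih c p hc hp hrc hrp
    have stepT : taskinLe (rsP (triangle (normWord m p) u)) (rsP (triangle (normWord m q) u)) := by
      apply Relation.ReflTransGen.single
      refine ⟨triangle (normWord m p) u, triangle (normWord m q) u,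
        triangle_isPerm (normWord_isPerm hp m) hu, triangle_isPerm (normWord_isPerm hq m) hu,
        rfl, rfl, ?_⟩
      exact weakLe_triangle_left (normWord_isPerm hp m) (normWord_isPerm hq m)
        (by rw [normWord_length hp m, normWord_length hq m]) (weakLe_normWord hp hq hw m)
    have last : rsP (triangle (normWord m q) u) = rsP (triangle (normWord m d) u) :=
      key_eq_v u m hq hd (hrq.trans hrd.symm)
    exact (ih'.trans stepT).trans (last ▸ Relation.ReflTransGen.refl)

theorem taskin_triangle_mono_aux (u u' v v' : List ℕ)
    (hu : IsPermWord u) (hu' : IsPermWord u') (hv : IsPermWord v) (hv' : IsPermWord v')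
    (hlu : u.length = u'.length) (hlv : v.length = v'.length)
    (hU : taskinLe (rsP u) (rsP u')) (hV : taskinLe (rsP v) (rsP v')) :
    taskinLe (rsP (triangle v u)) (rsP (triangle v' u')) := by
  have h1 : taskinLe (rsP (triangle v u)) (rsP (triangle v' u)) := by
    have := lift_v u hu v.length hV v v' hv hv' rfl rfl
    rwa [normWord_eq_self hv rfl, normWord_eq_self hv' hlv.symm] at this
  have h2 : taskinLe (rsP (triangle v' u)) (rsP (triangle v' u'))  := by
    have := lift_u v' hv' u.length hU u u' hu hu' rfl rfl
    rwa [normWord_eq_self hu rfl, normWord_eq_self hu' hlu.symm] at this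
  exact h1.trans h2


end TK

/-- The Taskin weak order on tableaux is compatible with the
induced product `△`: if `U ≤ U'` and `V ≤ V'` then `V △ U ≤ V' △ U'`. -/
theorem taskin_triangle_mono (u u' v v' : List ℕ)
    (hu : IsPermWord u) (hu' : IsPermWord u') (hv : IsPermWord v) (hv' : IsPermWord v')
    (hlu : u.length = u'.length) (hlv : v.length = v'.length)
    (hU : taskinLe (rsP u) (rsP u')) (hV : taskinLe (rsP v) (rsP v')) :
    taskinLe (rsP (triangle v u)) (rsP (triangle v' u')) :=
  TK.taskin_triangle_mono_aux u u' v v' hu hu' hv hv' hlu hlv hU hV
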